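/- arXiv:1509.07019 — 3 statements merged into one kernel-verified Lean document; each statement's English description precedes it below -/
import Mathlib

section
/- In the random intersection graph G(n,m,F) with m = ⌊βn^α⌋ and p_i = min(γ W_i n^{-(1+α)/2}, 1), if the weight distribution F has finite mean (normalized to 1), then for every α > 0 the conditional expected degree of vertex i given its weight satisfies E[D_i | W_i] → βγ²W_i as n → ∞. -/
open MeasureTheory ProbabilityTheory Filter Real

noncomputable section

/-- Bernoulli measure on `Bool` with success probability `p` (clamped into `[0,1]`). -/
def bern (p : ℝ) : Measure Bool :=
  (PMF.bernoulli (Real.toNNReal (min p 1))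
    (Real.toNNReal_le_one.mpr (min_le_right _ _))).toMeasure

instance bern.isProbabilityMeasure (p : ℝ) : IsProbabilityMeasure (bern p) := by
  unfold bern; infer_instance

/-- The (conditional) law of the bipartite graph `B(n,m,·)` given the group-membership
probabilities `p i` of the `n` vertices: vertex `i` is joined to each of the `m` groups
independently with probability `p i`. -/
def bipLaw (n m : ℕ) (p : Fin n → ℝ) : Measure (Fin n → Fin m → Bool) :=
  Measure.pi fun i => Measure.pi fun _ : Fin m => bern (p i)

instance bipLaw.isProbabilityMeasure (n m : ℕ) (p : Fin n → ℝ) :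
    IsProbabilityMeasure (bipLaw n m p) := by
  unfold bipLaw; infer_instance

/-- The number of groups, `m = ⌊β n^α⌋`. -/
def numGroups (β α : ℝ) (n : ℕ) : ℕ := ⌊β * (n : ℝ) ^ α⌋₊

/-- The group-membership probability `p_i = min(γ w n^{-(1+α)/2}, 1)` of a vertex
with weight `w`. -/
def pw (γ α : ℝ) (n : ℕ) (w : ℝ) : ℝ := min (γ * w * (n : ℝ) ^ (-(1 + α) / 2)) 1

/-- Two distinct vertices are adjacent in the random intersection graph iff they share
at least one group in the bipartite graph. -/
def Adj {n m : ℕ} (B : Fin n → Fin m → Bool) (i j : Fin n) : Prop :=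
  ∃ a : Fin m, B i a ∧ B j a

/-- The degree of vertex `i` in the random intersection graph determined by the
bipartite graph `B`. -/
def deg {n m : ℕ} (B : Fin n → Fin m → Bool) (i : Fin n) : ℕ :=
  Set.ncard {j | j ≠ i ∧ Adj B i j}

/-- The expected degree of vertex `0` in `G(n,m,F)`, conditional on its weight being `w`;
the weights of the remaining vertices are i.i.d. with law `F`. -/
def condExpDeg (α β γ : ℝ) (F : Measure ℝ) (n : ℕ) (w : ℝ) : ℝ :=
  if h : n ≠ 0 then
    haveI : NeZero n := ⟨h⟩
    ∫ v : Fin n → ℝ,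
      (∫ B, (deg B 0 : ℝ)
        ∂ bipLaw n (numGroups β α n) fun i => pw γ α n (if i = 0 then w else v i))
      ∂ Measure.pi fun _ : Fin n => F
  else 0

namespace RIG

def θ (p : ℝ) : ℝ := max (min p 1) 0

lemma θ_nonneg (p : ℝ) : 0 ≤ θ p := le_max_right _ _
lemma θ_le_one (p : ℝ) : θ p ≤ 1 := max_le (min_le_right _ _) zero_le_one

lemma integral_bern (p : ℝ) :
    ∫ b, (cond b (1:ℝ) 0) ∂ bern p = θ p := by
  unfold bern
  rw [PMF.bernoulli_expectation, Real.coe_toNNReal']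
  rfl

/-- Fubini for finite products of probability (σ-finite) measures. -/
theorem integral_pi_prod : ∀ {n : ℕ} {E : Fin n → Type} [∀ i, MeasurableSpace (E i)]
    (μ : ∀ i, Measure (E i)) [∀ i, SigmaFinite (μ i)] (f : (i : Fin n) → E i → ℝ),
    ∫ x : (i : Fin n) → E i, ∏ i, f i (x i) ∂Measure.pi μ = ∏ i, ∫ x, f i x ∂μ i := by
  intro n
  induction n with
  | zero =>
      intro E _ μ _ f
      simp [integral_const, Measure.pi_univ, measureReal_def]
  | succ n ih =>
      intro E _ μ _ f
      calc
        ∫ x : (i : Fin (n+1)) → E i, ∏ i, f i (x i) ∂Measure.pi μ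
            = ∫ x : E 0 × ((i : Fin n) → E (Fin.succ i)),
              f 0 x.1 * ∏ i : Fin n, f (Fin.succ i) (x.2 i)
              ∂((μ 0).prod (Measure.pi fun i => μ (Fin.succ i))) := by
          have h := (measurePreserving_piFinSuccAbove μ 0).symm
          rw [← h.integral_comp']
          simp_rw [MeasurableEquiv.piFinSuccAbove_symm_apply, Fin.insertNthEquiv,
            Fin.prod_univ_succ, Fin.insertNth_zero, Equiv.coe_fn_mk, Fin.cons_succ,
            Fin.cons_zero]
          rfl
        _ = (∫ x, f 0 x ∂μ 0) * ∏ i : Fin n, ∫ x, f (Fin.succ i) x ∂μ (Fin.succ i) := by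
          rw [← ih, ← integral_prod_mul]
        _ = ∏ i, ∫ x, f i x ∂μ i := by rw [Fin.prod_univ_succ]

lemma row_integral {m : ℕ} (p : ℝ) (S : Finset (Fin m)) :
    ∫ x : Fin m → Bool, ∏ a ∈ S, (cond (x a) (1:ℝ) 0) ∂ Measure.pi (fun _ => bern p)
      = θ p ^ S.card := by
  classical
  have h1 : ∀ x : Fin m → Bool, ∏ a ∈ S, (cond (x a) (1:ℝ) 0)
      = ∏ a : Fin m, (if a ∈ S then cond (x a) (1:ℝ) 0 else 1) := by
    intro x
    rw [← Finset.prod_filter, Finset.filter_mem_eq_inter, Finset.univ_inter]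
  simp_rw [h1]
  rw [integral_pi_prod (fun _ => bern p) (fun a y => if a ∈ S then cond y (1:ℝ) 0 else 1)]
  have h2 : ∀ a : Fin m, (∫ y, (if a ∈ S then cond y (1:ℝ) 0 else 1) ∂bern p)
      = if a ∈ S then θ p else 1 := by
    intro a; by_cases h : a ∈ S
    · simp [h, integral_bern]
    · simp only [if_neg h, integral_const]
      rw [probReal_univ, smul_eq_mul, mul_one]
  simp_rw [h2]
  rw [← Finset.prod_filter, Finset.filter_mem_eq_inter, Finset.univ_inter, Finset.prod_const]

lemma prod_eq_mul_of_ne {M : Type*} [CommMonoid M] {n : ℕ} {i j : Fin n} (hij : i ≠ j)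
    (g : Fin n → M) (hg : ∀ k, k ≠ i → k ≠ j → g k = 1) : ∏ k, g k = g i * g j := by
  classical
  rw [← Finset.mul_prod_erase Finset.univ g (Finset.mem_univ i),
    ← Finset.mul_prod_erase _ g (Finset.mem_erase.mpr ⟨Ne.symm hij, Finset.mem_univ j⟩)]
  have h1 : ∏ k ∈ (Finset.univ.erase i).erase j, g k = 1 := by
    apply Finset.prod_eq_one
    intro k hk
    have h2 := Finset.mem_erase.mp hk
    have h3 := Finset.mem_erase.mp h2.2
    exact hg k h3.1 h2.1
  rw [h1, mul_one]


open scoped Classical in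
lemma integral_adj {n m : ℕ} (q : Fin n → ℝ) {i j : Fin n} (hij : i ≠ j) :
    ∫ B, (if Adj B i j then (1:ℝ) else 0) ∂ bipLaw n m q
      = 1 - (1 - θ (q i) * θ (q j)) ^ m := by
  classical
  -- pointwise identity with the inclusion–exclusion expansion
  have key : ∀ B : Fin n → Fin m → Bool,
      (if Adj B i j then (1:ℝ) else 0)
        = 1 - ∑ t ∈ (Finset.univ : Finset (Fin m)).powerset,
            (-1 : ℝ) ^ t.card *
              ((∏ a ∈ t, cond (B i a) (1:ℝ) 0) * (∏ a ∈ t, cond (B j a) (1:ℝ) 0)) := by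
    intro B
    have hexp : ∏ a : Fin m, ((1:ℝ) - cond (B i a) (1:ℝ) 0 * cond (B j a) (1:ℝ) 0)
        = ∑ t ∈ (Finset.univ : Finset (Fin m)).powerset,
            (-1 : ℝ) ^ t.card *
              ((∏ a ∈ t, cond (B i a) (1:ℝ) 0) * (∏ a ∈ t, cond (B j a) (1:ℝ) 0)) := by
      have h0 : ∏ a : Fin m, ((1:ℝ) - cond (B i a) (1:ℝ) 0 * cond (B j a) (1:ℝ) 0)
          = ∏ a : Fin m, ((-(cond (B i a) (1:ℝ) 0 * cond (B j a) (1:ℝ) 0)) + 1) := by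
        apply Finset.prod_congr rfl; intro a _; ring
      rw [h0, Finset.prod_add]
      apply Finset.sum_congr rfl
      intro t _
      rw [Finset.prod_const_one, mul_one]
      have : ∏ a ∈ t, (-(cond (B i a) (1:ℝ) 0 * cond (B j a) (1:ℝ) 0))
          = (-1 : ℝ) ^ t.card * ∏ a ∈ t, (cond (B i a) (1:ℝ) 0 * cond (B j a) (1:ℝ) 0) := by
        rw [← Finset.prod_const, ← Finset.prod_mul_distrib]
        exact Finset.prod_congr rfl (fun a _ => by ring)
      rw [this, Finset.prod_mul_distrib]
    rw [← hexp]
    by_cases h : Adj B i j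
    · obtain ⟨a, h1, h2⟩ := h
      rw [if_pos ⟨a, h1, h2⟩]
      have : ∏ a : Fin m, ((1:ℝ) - cond (B i a) (1:ℝ) 0 * cond (B j a) (1:ℝ) 0) = 0 := by
        apply Finset.prod_eq_zero (Finset.mem_univ a)
        simp [h1, h2]
      rw [this]; ring
    · rw [if_neg h]
      have : ∏ a : Fin m, ((1:ℝ) - cond (B i a) (1:ℝ) 0 * cond (B j a) (1:ℝ) 0) = 1 := by
        apply Finset.prod_eq_one
        intro a _
        have ha : ¬ (B i a ∧ B j a) := fun hc => h ⟨a, hc⟩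
        cases hBi : B i a <;> cases hBj : B j a <;> simp_all
      rw [this]; ring
  simp_rw [key]
  rw [integral_sub (Integrable.of_finite) (Integrable.of_finite), integral_const]
  rw [integral_finset_sum _ (fun t _ => Integrable.of_finite)]
  have hterm : ∀ t ∈ (Finset.univ : Finset (Fin m)).powerset,
      (∫ B, (-1 : ℝ) ^ t.card *
        ((∏ a ∈ t, cond (B i a) (1:ℝ) 0) * (∏ a ∈ t, cond (B j a) (1:ℝ) 0)) ∂ bipLaw n m q)
      = (-(θ (q i) * θ (q j))) ^ t.card := by
    intro t _
    rw [integral_const_mul]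
    have hpt : ∀ B : Fin n → Fin m → Bool,
        (∏ a ∈ t, cond (B i a) (1:ℝ) 0) * (∏ a ∈ t, cond (B j a) (1:ℝ) 0)
          = ∏ k : Fin n, (if k = i then ∏ a ∈ t, cond (B k a) (1:ℝ) 0
              else if k = j then ∏ a ∈ t, cond (B k a) (1:ℝ) 0 else 1) := by
      intro B
      rw [prod_eq_mul_of_ne hij _ (fun k hk1 hk2 => by rw [if_neg hk1, if_neg hk2])]
      rw [if_pos rfl, if_neg (Ne.symm hij), if_pos rfl]
    simp_rw [hpt]
    rw [show bipLaw n m q = Measure.pi (fun k => Measure.pi fun _ : Fin m => bern (q k)) from rfl]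
    rw [integral_pi_prod (fun k => Measure.pi fun _ : Fin m => bern (q k))
      (fun k r => if k = i then ∏ a ∈ t, cond (r a) (1:ℝ) 0
          else if k = j then ∏ a ∈ t, cond (r a) (1:ℝ) 0 else 1)]
    have hrow : ∀ k : Fin n,
        (∫ r : Fin m → Bool, (if k = i then ∏ a ∈ t, cond (r a) (1:ℝ) 0
            else if k = j then ∏ a ∈ t, cond (r a) (1:ℝ) 0 else 1)
          ∂ Measure.pi fun _ : Fin m => bern (q k))
        = (if k = i then θ (q k) ^ t.card else if k = j then θ (q k) ^ t.card else 1) := by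
      intro k
      by_cases h1 : k = i
      · simp only [if_pos h1]; exact row_integral (q k) t
      · by_cases h2 : k = j
        · simp only [if_neg h1, if_pos h2]; exact row_integral (q k) t
        · simp only [if_neg h1, if_neg h2, integral_const]
          rw [probReal_univ, smul_eq_mul, mul_one]
    simp_rw [hrow]
    rw [prod_eq_mul_of_ne hij _ (fun k hk1 hk2 => by rw [if_neg hk1, if_neg hk2])]
    rw [if_pos rfl, if_neg (Ne.symm hij), if_pos rfl]
    rw [neg_pow (θ (q i) * θ (q j)), mul_pow]
  rw [Finset.sum_congr rfl hterm]
  have hsum : ∑ t ∈ (Finset.univ : Finset (Fin m)).powerset, (-(θ (q i) * θ (q j))) ^ t.card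
      = (1 - θ (q i) * θ (q j)) ^ m := by
    have := Finset.prod_add (fun _ : Fin m => -(θ (q i) * θ (q j))) (fun _ : Fin m => (1:ℝ))
      Finset.univ
    simp only [Finset.prod_const, Finset.prod_const_one, one_pow, mul_one] at this
    rw [← this]
    congr 1
    · ring
    · simp
  rw [hsum]
  simp


open scoped Classical in
lemma integral_deg {n m : ℕ} [NeZero n] (q : Fin n → ℝ) :
    ∫ B, (deg B 0 : ℝ) ∂ bipLaw n m q
      = ∑ j ∈ Finset.univ.erase 0, (1 - (1 - θ (q 0) * θ (q j)) ^ m) := by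
  have hdeg : ∀ B : Fin n → Fin m → Bool, ((deg B 0 : ℕ) : ℝ)
      = ∑ j ∈ Finset.univ.erase 0, (if Adj B 0 j then (1:ℝ) else 0) := by
    intro B
    rw [deg, Set.ncard_eq_toFinset_card', Set.toFinset_setOf, Finset.card_filter]
    push_cast
    rw [← Finset.sum_erase (Finset.univ) (f := fun j =>
        if j ≠ 0 ∧ Adj B 0 j then (1:ℝ) else 0) (a := 0) (by simp)]
    apply Finset.sum_congr rfl
    intro j hj
    have hj0 := (Finset.mem_erase.mp hj).1
    simp [hj0]
  simp_rw [hdeg]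
  rw [integral_finset_sum _ (fun j _ => Integrable.of_finite)]
  apply Finset.sum_congr rfl
  intro j hj
  exact integral_adj q (Ne.symm (Finset.mem_erase.mp hj).1)


lemma pw_le_one (γ α : ℝ) (n : ℕ) (x : ℝ) : pw γ α n x ≤ 1 := min_le_right _ _

lemma pw_nonneg {γ x : ℝ} (h : 0 ≤ γ * x) (α : ℝ) (n : ℕ) : 0 ≤ pw γ α n x :=
  le_min (by positivity) zero_le_one

lemma pw_le (γ α : ℝ) (n : ℕ) (x : ℝ) : pw γ α n x ≤ γ * x * (n : ℝ) ^ (-(1 + α) / 2) :=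
  min_le_left _ _

lemma θ_pw {γ x : ℝ} (h : 0 ≤ γ * x) (α : ℝ) (n : ℕ) : θ (pw γ α n x) = pw γ α n x := by
  unfold θ
  rw [min_eq_left (pw_le_one γ α n x)]
  exact max_eq_left (pw_nonneg h α n)

lemma θ_pw_le {γ α : ℝ} (n : ℕ) (x : ℝ) (hγ : 0 ≤ γ) (hx : 0 ≤ x) :
    θ (pw γ α n x) ≤ γ * x * (n : ℝ) ^ (-(1 + α) / 2) := by
  rw [θ_pw (mul_nonneg hγ hx)]
  exact pw_le _ _ _ _

lemma condExpDeg_eq (α β γ : ℝ) (F : Measure ℝ) [IsProbabilityMeasure F] {n : ℕ}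
    (hn : n ≠ 0) (w : ℝ) :
    condExpDeg α β γ F n w
      = ((n : ℝ) - 1) *
        ∫ x, (1 - (1 - θ (pw γ α n w) * θ (pw γ α n x)) ^ (numGroups β α n)) ∂F := by
  haveI : NeZero n := ⟨hn⟩
  rw [condExpDeg, dif_pos hn]
  have h1 : ∀ v : Fin n → ℝ,
      (∫ B, (deg B 0 : ℝ)
          ∂ bipLaw n (numGroups β α n) fun i => pw γ α n (if i = 0 then w else v i))
        = ∑ j ∈ Finset.univ.erase 0,
            (1 - (1 - θ (pw γ α n w) * θ (pw γ α n (v j))) ^ (numGroups β α n)) := by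
    intro v
    rw [integral_deg]
    apply Finset.sum_congr rfl
    intro j hj
    have hj0 := (Finset.mem_erase.mp hj).1
    simp [hj0]
  simp_rw [h1]
  set φ : ℝ → ℝ :=
    fun x => 1 - (1 - θ (pw γ α n w) * θ (pw γ α n x)) ^ (numGroups β α n) with hφdef
  have hc01 : ∀ x : ℝ, 0 ≤ θ (pw γ α n w) * θ (pw γ α n x) ∧
      θ (pw γ α n w) * θ (pw γ α n x) ≤ 1 :=
    fun x => ⟨mul_nonneg (θ_nonneg _) (θ_nonneg _),
      mul_le_one₀ (θ_le_one _) (θ_nonneg _) (θ_le_one _)⟩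
  have hφ01 : ∀ x : ℝ, 0 ≤ φ x ∧ φ x ≤ 1 := by
    intro x
    obtain ⟨h0, h1'⟩ := hc01 x
    constructor
    · have := pow_le_one₀ (by linarith) (by linarith :
        (1 - θ (pw γ α n w) * θ (pw γ α n x)) ≤ 1) (n := numGroups β α n)
      simp only [hφdef]; linarith
    · have := pow_nonneg (by linarith : (0:ℝ) ≤ 1 - θ (pw γ α n w) * θ (pw γ α n x))
        (numGroups β α n)
      simp only [hφdef]; linarith
  have hφm : Measurable φ := by
    apply Measurable.const_sub
    apply Measurable.pow_const
    apply Measurable.const_sub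
    apply Measurable.const_mul
    unfold θ pw
    exact ((((measurable_id.const_mul γ).mul_const _).min measurable_const).min
      measurable_const).max measurable_const
  have hint : ∀ j : Fin n,
      Integrable (fun v : Fin n → ℝ => φ (v j)) (Measure.pi fun _ : Fin n => F) := by
    intro j
    apply Integrable.mono' (integrable_const (1:ℝ))
    · exact (hφm.comp (measurable_pi_apply j)).aestronglyMeasurable
    · refine ae_of_all _ fun v => ?_
      rw [Real.norm_eq_abs, abs_le]
      exact ⟨by linarith [(hφ01 (v j)).1], (hφ01 (v j)).2⟩
  rw [integral_finset_sum _ (fun j _ => hint j)]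
  have h2 : ∀ j : Fin n,
      (∫ v : Fin n → ℝ, φ (v j) ∂ Measure.pi fun _ : Fin n => F) = ∫ x, φ x ∂F := by
    intro j
    classical
    have hpt : (fun v : Fin n → ℝ => φ (v j))
        = fun v => ∏ k : Fin n, (if k = j then φ (v k) else 1) := by
      funext v
      rw [Finset.prod_ite_eq' Finset.univ j (fun k => φ (v k))]
      simp
    rw [hpt, integral_pi_prod (fun _ : Fin n => F) (fun k x => if k = j then φ x else 1)]
    have h3 : ∀ k : Fin n, (∫ x, (if k = j then φ x else 1) ∂F)
        = if k = j then ∫ x, φ x ∂F else 1 := by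
      intro k
      by_cases h : k = j
      · simp only [if_pos h]
      · simp only [if_neg h, integral_const]
        rw [probReal_univ, smul_eq_mul, mul_one]
    simp_rw [h3]
    rw [Finset.prod_ite_eq' Finset.univ j (fun _ => ∫ x, φ x ∂F)]
    simp
  simp_rw [h2]
  rw [Finset.sum_const, Finset.card_erase_of_mem (Finset.mem_univ 0), nsmul_eq_mul]
  congr 1
  rw [Nat.cast_sub (Nat.one_le_iff_ne_zero.mpr (by simpa using hn))]
  simp


lemma pow_one_sub_le {t : ℝ} (h0 : 0 ≤ t) (h1 : t ≤ 1) (m : ℕ) :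
    (1 - t) ^ m ≤ 1 - m * t + (m * t) ^ 2 / 2 := by
  induction m with
  | zero => norm_num
  | succ k ih =>
    have hpos : (0:ℝ) ≤ 1 - t := by linarith
    have hk : (0:ℝ) ≤ (k:ℝ) := Nat.cast_nonneg k
    calc (1 - t) ^ (k+1) = (1 - t) ^ k * (1 - t) := pow_succ _ _
      _ ≤ (1 - k * t + (k * t) ^ 2 / 2) * (1 - t) :=
          mul_le_mul_of_nonneg_right ih hpos
      _ ≤ 1 - (↑(k+1) : ℝ) * t + ((↑(k+1) : ℝ) * t) ^ 2 / 2 := by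
          push_cast
          nlinarith [sq_nonneg t, sq_nonneg ((k:ℝ)*t),
            mul_nonneg (mul_nonneg hk hk) (mul_nonneg (mul_nonneg h0 h0) h0)]

lemma one_sub_mul_le_pow {t : ℝ} (h1 : t ≤ 1) (m : ℕ) : 1 - m * t ≤ (1 - t) ^ m := by
  have h := one_add_mul_le_pow (a := -t) (by linarith) m
  calc 1 - m * t = 1 + m * (-t) := by ring
    _ ≤ (1 + -t) ^ m := h
    _ = (1 - t) ^ m := by ring_nf

lemma tendsto_d {β α : ℝ} (hβ : 0 < β) (hα : 0 < α) :
    Tendsto (fun n : ℕ => (numGroups β α n : ℝ) * (n:ℝ) ^ (-α)) atTop (nhds β) := by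
  have hnc : Tendsto (fun n : ℕ => (n:ℝ)) atTop atTop := tendsto_natCast_atTop_atTop
  have hpow0 : Tendsto (fun n : ℕ => (n:ℝ) ^ (-α)) atTop (nhds 0) :=
    (tendsto_rpow_neg_atTop hα).comp hnc
  have hge : ∀ᶠ n : ℕ in atTop, (1:ℝ) ≤ (n:ℝ) := hnc.eventually_ge_atTop 1
  have hlow : Tendsto (fun n : ℕ => β - (n:ℝ) ^ (-α)) atTop (nhds β) := by
    simpa using tendsto_const_nhds.sub hpow0
  refine tendsto_of_tendsto_of_tendsto_of_le_of_le' hlow tendsto_const_nhds ?_ ?_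
  · filter_upwards [hge] with n hn
    have hn0 : (0:ℝ) < (n:ℝ) := lt_of_lt_of_le one_pos hn
    have h2 : (0:ℝ) ≤ (n:ℝ) ^ (-α) := Real.rpow_nonneg hn0.le _
    have h3 : (n:ℝ) ^ α * (n:ℝ) ^ (-α) = 1 := by
      rw [← Real.rpow_add hn0]; simp
    have h1 : β * (n:ℝ) ^ α - 1 ≤ (numGroups β α n : ℝ) := (Nat.sub_one_lt_floor _).le
    calc β - (n:ℝ) ^ (-α) = (β * (n:ℝ) ^ α - 1) * (n:ℝ) ^ (-α) := by
          rw [sub_mul, one_mul, mul_assoc, h3, mul_one]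
      _ ≤ (numGroups β α n : ℝ) * (n:ℝ) ^ (-α) := mul_le_mul_of_nonneg_right h1 h2
  · filter_upwards [hge] with n hn
    have hn0 : (0:ℝ) < (n:ℝ) := lt_of_lt_of_le one_pos hn
    have h2 : (0:ℝ) ≤ (n:ℝ) ^ (-α) := Real.rpow_nonneg hn0.le _
    have h3 : (n:ℝ) ^ α * (n:ℝ) ^ (-α) = 1 := by
      rw [← Real.rpow_add hn0]; simp
    have h1 : (numGroups β α n : ℝ) ≤ β * (n:ℝ) ^ α := Nat.floor_le (by positivity)
    calc (numGroups β α n : ℝ) * (n:ℝ) ^ (-α) ≤ (β * (n:ℝ) ^ α) * (n:ℝ) ^ (-α) :=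
          mul_le_mul_of_nonneg_right h1 h2
      _ = β := by rw [mul_assoc, h3, mul_one]

lemma nmt_eq {α : ℝ} {n : ℕ} (hn : (0:ℝ) < (n:ℝ)) :
    (n:ℝ) * ((n:ℝ) ^ (-(1 + α) / 2) * (n:ℝ) ^ (-(1 + α) / 2)) = (n:ℝ) ^ (-α) := by
  have h : (n:ℝ) * ((n:ℝ) ^ (-(1 + α) / 2) * (n:ℝ) ^ (-(1 + α) / 2))
      = (n:ℝ) ^ ((1:ℝ) + (-(1 + α) / 2 + -(1 + α) / 2)) := by
    rw [Real.rpow_add hn, Real.rpow_add hn, Real.rpow_one]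
  rw [h]
  congr 1
  ring

lemma tendsto_nphi {α β γ w x : ℝ} (hα : 0 < α) (hβ : 0 < β) (hγ : 0 < γ)
    (hw : 0 < w) (hx : 0 < x) :
    Tendsto (fun n : ℕ => (n:ℝ) *
        (1 - (1 - θ (pw γ α n w) * θ (pw γ α n x)) ^ (numGroups β α n)))
      atTop (nhds (β * γ ^ 2 * w * x)) := by
  have hnc : Tendsto (fun n : ℕ => (n:ℝ)) atTop atTop := tendsto_natCast_atTop_atTop
  have hge : ∀ᶠ n : ℕ in atTop, (1:ℝ) ≤ (n:ℝ) := hnc.eventually_ge_atTop 1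
  have hpe : ∀ᶠ n : ℕ in atTop,
      pw γ α n w = γ * w * (n:ℝ) ^ (-(1 + α) / 2)
        ∧ pw γ α n x = γ * x * (n:ℝ) ^ (-(1 + α) / 2) := by
    have hp0 : Tendsto (fun n : ℕ => (n:ℝ) ^ (-(1 + α) / 2)) atTop (nhds 0) := by
      have h := (tendsto_rpow_neg_atTop (y := (1 + α) / 2) (by linarith)).comp hnc
      apply h.congr
      intro n
      simp only [Function.comp_apply]
      congr 1
      ring
    have hw1 : ∀ᶠ n : ℕ in atTop, γ * w * ((n:ℝ) ^ (-(1 + α) / 2)) < 1 := by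
      have h := hp0.const_mul (γ * w)
      rw [mul_zero] at h
      exact h.eventually_lt_const one_pos
    have hx1 : ∀ᶠ n : ℕ in atTop, γ * x * ((n:ℝ) ^ (-(1 + α) / 2)) < 1 := by
      have h := hp0.const_mul (γ * x)
      rw [mul_zero] at h
      exact h.eventually_lt_const one_pos
    filter_upwards [hw1, hx1] with n h1 h2
    exact ⟨min_eq_left h1.le, min_eq_left h2.le⟩
  have hθ : ∀ n : ℕ, θ (pw γ α n w) * θ (pw γ α n x) = pw γ α n w * pw γ α n x := by
    intro n
    rw [θ_pw (by positivity), θ_pw (by positivity)]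
  have ht01 : ∀ n : ℕ, 0 ≤ pw γ α n w * pw γ α n x ∧ pw γ α n w * pw γ α n x ≤ 1 := by
    intro n
    exact ⟨mul_nonneg (pw_nonneg (by positivity) _ _) (pw_nonneg (by positivity) _ _),
      mul_le_one₀ (pw_le_one _ _ _ _) (pw_nonneg (by positivity) _ _) (pw_le_one _ _ _ _)⟩
  have hAt : Tendsto (fun n : ℕ =>
      (n:ℝ) * (numGroups β α n : ℝ) * (pw γ α n w * pw γ α n x)) atTop
      (nhds (β * γ ^ 2 * w * x)) := by
    have h1 := (tendsto_d hβ hα).const_mul (γ ^ 2 * (w * x))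
    rw [show γ ^ 2 * (w * x) * β = β * γ ^ 2 * w * x by ring] at h1
    apply h1.congr'
    filter_upwards [hpe, hge] with n hn hn1
    have hn0 : (0:ℝ) < (n:ℝ) := lt_of_lt_of_le one_pos hn1
    rw [hn.1, hn.2, ← nmt_eq (α := α) hn0]
    ring
  have hinv : Tendsto (fun n : ℕ => ((2:ℝ) * (n:ℝ))⁻¹) atTop (nhds 0) := by
    apply Tendsto.inv_tendsto_atTop
    exact hnc.const_mul_atTop two_pos
  have hlow : Tendsto (fun n : ℕ =>
      (n:ℝ) * (numGroups β α n : ℝ) * (pw γ α n w * pw γ α n x)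
        - ((n:ℝ) * (numGroups β α n : ℝ) * (pw γ α n w * pw γ α n x)) ^ 2
            * ((2:ℝ) * (n:ℝ))⁻¹) atTop (nhds (β * γ ^ 2 * w * x)) := by
    have h := hAt.sub (((hAt.mul hAt)).mul hinv)
    simpa [sq] using h
  have hsq : Tendsto (fun n : ℕ =>
      (n:ℝ) * (1 - (1 - pw γ α n w * pw γ α n x) ^ (numGroups β α n))) atTop
      (nhds (β * γ ^ 2 * w * x)) := by
    refine tendsto_of_tendsto_of_tendsto_of_le_of_le' hlow hAt ?_ ?_
    · filter_upwards [hge] with n hn1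
      have hn0 : (0:ℝ) < (n:ℝ) := lt_of_lt_of_le one_pos hn1
      obtain ⟨h0, h1⟩ := ht01 n
      have hub := pow_one_sub_le h0 h1 (numGroups β α n)
      have e1 : (n:ℝ) * (numGroups β α n : ℝ) * (pw γ α n w * pw γ α n x)
          - ((n:ℝ) * (numGroups β α n : ℝ) * (pw γ α n w * pw γ α n x)) ^ 2
              * ((2:ℝ) * (n:ℝ))⁻¹
          = (n:ℝ) * ((numGroups β α n : ℝ) * (pw γ α n w * pw γ α n x)
              - ((numGroups β α n : ℝ) * (pw γ α n w * pw γ α n x)) ^ 2 / 2) := by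
        field_simp
      rw [e1]
      apply mul_le_mul_of_nonneg_left _ hn0.le
      linarith
    · filter_upwards with n
      obtain ⟨h0, h1⟩ := ht01 n
      have hlb := one_sub_mul_le_pow h1 (numGroups β α n)
      rw [mul_assoc]
      apply mul_le_mul_of_nonneg_left _ (Nat.cast_nonneg n)
      linarith
  apply hsq.congr
  intro n
  rw [hθ n]

end RIG

/-- In the random intersection graph `G(n,m,F)` with `m = ⌊β n^α⌋` and
`p_i = min(γ W_i n^{-(1+α)/2}, 1)`, if the weight distribution `F` has finite mean
(normalized to `1`), then for every `α > 0` the conditional expected degree of a vertex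
given its weight satisfies `E[D_i | W_i = w] → β γ² w` as `n → ∞`. -/
theorem conditional_expected_degree (α β γ : ℝ) (hα : 0 < α) (hβ : 0 < β) (hγ : 0 < γ)
    (F : Measure ℝ) [IsProbabilityMeasure F]
    (hFpos : F (Set.Iic 0) = 0)
    (hFint : Integrable (fun x => x) F) (hFmean : ∫ x, x ∂F = 1) :
    ∀ w : ℝ, 0 < w →
      Tendsto (fun n => condExpDeg α β γ F n w) atTop (nhds (β * γ ^ 2 * w)) := by
  intro w hw
  have hnc : Tendsto (fun n : ℕ => (n:ℝ)) atTop atTop := tendsto_natCast_atTop_atTop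
  have haex : ∀ᵐ x ∂F, 0 < x := by
    have hset : {x : ℝ | ¬ 0 < x} = Set.Iic 0 := by ext x; simp [not_lt]
    rw [ae_iff, hset]; exact hFpos
  have hmean' : (∫ x, β * γ ^ 2 * w * x ∂F) = β * γ ^ 2 * w := by
    rw [integral_const_mul, hFmean, mul_one]
  have hkey : Tendsto (fun n : ℕ => ∫ x, (n:ℝ) *
      (1 - (1 - RIG.θ (pw γ α n w) * RIG.θ (pw γ α n x)) ^ (numGroups β α n)) ∂F)
      atTop (nhds (β * γ ^ 2 * w)) := by
    rw [← hmean']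
    apply tendsto_integral_filter_of_dominated_convergence
      (bound := fun x => β * γ ^ 2 * w * |x|)
    · apply Eventually.of_forall
      intro n
      apply Measurable.aestronglyMeasurable
      apply Measurable.const_mul
      apply Measurable.const_sub
      apply Measurable.pow_const
      apply Measurable.const_sub
      apply Measurable.const_mul
      unfold RIG.θ pw
      exact ((((measurable_id.const_mul γ).mul_const _).min measurable_const).min
        measurable_const).max measurable_const
    · apply Eventually.of_forall
      intro n
      filter_upwards [haex] with x hx
      have hc0 : 0 ≤ RIG.θ (pw γ α n w) * RIG.θ (pw γ α n x) :=
        mul_nonneg (RIG.θ_nonneg _) (RIG.θ_nonneg _)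
      have hc1 : RIG.θ (pw γ α n w) * RIG.θ (pw γ α n x) ≤ 1 :=
        mul_le_one₀ (RIG.θ_le_one _) (RIG.θ_nonneg _) (RIG.θ_le_one _)
      have hφ0 : 0 ≤ 1 - (1 - RIG.θ (pw γ α n w) * RIG.θ (pw γ α n x)) ^ (numGroups β α n) := by
        have := pow_le_one₀ (by linarith : (0:ℝ) ≤ 1 - RIG.θ (pw γ α n w) * RIG.θ (pw γ α n x))
          (by linarith) (n := numGroups β α n)
        linarith
      have hφub : 1 - (1 - RIG.θ (pw γ α n w) * RIG.θ (pw γ α n x)) ^ (numGroups β α n)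
          ≤ (numGroups β α n : ℝ) * (RIG.θ (pw γ α n w) * RIG.θ (pw γ α n x)) := by
        have := RIG.one_sub_mul_le_pow hc1 (numGroups β α n)
        linarith
      rw [Real.norm_eq_abs, abs_of_nonneg (mul_nonneg (Nat.cast_nonneg n) hφ0)]
      have key2 : (n:ℝ) * ((numGroups β α n : ℝ) * (RIG.θ (pw γ α n w) * RIG.θ (pw γ α n x)))
          ≤ β * γ ^ 2 * w * x := by
        rcases Nat.eq_zero_or_pos n with h0 | hpos
        · rw [h0]; push_cast; rw [zero_mul]; positivity
        · have hn0 : (0:ℝ) < (n:ℝ) := by exact_mod_cast hpos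
          have hM : (numGroups β α n : ℝ) ≤ β * (n:ℝ) ^ α := Nat.floor_le (by positivity)
          have hθw : RIG.θ (pw γ α n w) ≤ γ * w * (n:ℝ) ^ (-(1 + α) / 2) :=
            RIG.θ_pw_le n w hγ.le hw.le
          have hθx : RIG.θ (pw γ α n x) ≤ γ * x * (n:ℝ) ^ (-(1 + α) / 2) :=
            RIG.θ_pw_le n x hγ.le hx.le
          have hc' : RIG.θ (pw γ α n w) * RIG.θ (pw γ α n x)
              ≤ (γ * w * (n:ℝ) ^ (-(1 + α) / 2)) * (γ * x * (n:ℝ) ^ (-(1 + α) / 2)) :=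
            mul_le_mul hθw hθx (RIG.θ_nonneg _) (by positivity)
          have hstep : (n:ℝ) * ((numGroups β α n : ℝ)
                * (RIG.θ (pw γ α n w) * RIG.θ (pw γ α n x)))
              ≤ (n:ℝ) * ((β * (n:ℝ) ^ α)
                * ((γ * w * (n:ℝ) ^ (-(1 + α) / 2)) * (γ * x * (n:ℝ) ^ (-(1 + α) / 2)))) := by
            apply mul_le_mul_of_nonneg_left _ hn0.le
            exact mul_le_mul hM hc' hc0 (by positivity)
          refine hstep.trans (le_of_eq ?_)
          have h3 : (n:ℝ) * ((n:ℝ) ^ (-(1 + α) / 2) * (n:ℝ) ^ (-(1 + α) / 2)) = (n:ℝ) ^ (-α) :=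
            RIG.nmt_eq hn0
          have h4 : (n:ℝ) ^ α * (n:ℝ) ^ (-α) = 1 := by rw [← Real.rpow_add hn0]; simp
          calc (n:ℝ) * ((β * (n:ℝ) ^ α)
                * ((γ * w * (n:ℝ) ^ (-(1 + α) / 2)) * (γ * x * (n:ℝ) ^ (-(1 + α) / 2))))
              = (β * γ ^ 2 * w * x) * ((n:ℝ) ^ α
                * ((n:ℝ) * ((n:ℝ) ^ (-(1 + α) / 2) * (n:ℝ) ^ (-(1 + α) / 2)))) := by ring
            _ = (β * γ ^ 2 * w * x) * ((n:ℝ) ^ α * (n:ℝ) ^ (-α)) := by rw [h3]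
            _ = β * γ ^ 2 * w * x := by rw [h4, mul_one]
      calc (n:ℝ) * (1 - (1 - RIG.θ (pw γ α n w) * RIG.θ (pw γ α n x)) ^ (numGroups β α n))
          ≤ (n:ℝ) * ((numGroups β α n : ℝ) * (RIG.θ (pw γ α n w) * RIG.θ (pw γ α n x))) :=
            mul_le_mul_of_nonneg_left hφub (Nat.cast_nonneg n)
        _ ≤ β * γ ^ 2 * w * x := key2
        _ ≤ β * γ ^ 2 * w * |x| :=
            mul_le_mul_of_nonneg_left (le_abs_self x) (by positivity)
    · exact (hFint.abs).const_mul _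
    · filter_upwards [haex] with x hx
      exact RIG.tendsto_nphi hα hβ hγ hw hx
  have hfrac : Tendsto (fun n : ℕ => ((n:ℝ) - 1) / (n:ℝ)) atTop (nhds 1) := by
    have h1 : Tendsto (fun n : ℕ => 1 - ((n:ℝ))⁻¹) atTop (nhds 1) := by
      have h2 : Tendsto (fun n : ℕ => ((n:ℝ))⁻¹) atTop (nhds 0) := hnc.inv_tendsto_atTop
      simpa using tendsto_const_nhds.sub h2
    apply h1.congr'
    filter_upwards [hnc.eventually_ge_atTop 1] with n hn
    have hn0 : (n:ℝ) ≠ 0 := by linarith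
    field_simp
  have hmul := hfrac.mul hkey
  rw [one_mul] at hmul
  apply hmul.congr'
  filter_upwards [eventually_ge_atTop 1] with n hn
  have hn0 : n ≠ 0 := Nat.one_le_iff_ne_zero.mp hn
  have hn0' : ((n:ℝ)) ≠ 0 := Nat.cast_ne_zero.mpr hn0
  rw [RIG.condExpDeg_eq α β γ F hn0 w, integral_const_mul]
  field_simp
end
end

section
/- In the random intersection graph G(n,m,F) with m = ⌊βn^α⌋ and p_i = min(γ W_i n^{-(1+α)/2}, 1), if F has finite mean and α < 1, then for any three distinct vertices i, j, k the conditional clustering coefficient c̄_{i,j,k}^{(n)} = P̄_n(E_{ij} | E_{ik}, E_{jk}) converges to 1 in probability as n → ∞. -/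
open MeasureTheory ProbabilityTheory Filter Real

noncomputable section

/-- The conditional (on the weights) clustering coefficient
`c̄_{i,j,k}^{(n)} = P̄_n(E_{ij} | E_{ik}, E_{jk})` for the three distinct vertices
`i = 0`, `j = 1`, `k = 2` of `G(n,m,F)`, as a function of the weight sequence `v`:
the ratio `P̄_n(E_{ij} ∩ E_{ik} ∩ E_{jk}) / P̄_n(E_{ik} ∩ E_{jk})`. -/
def clusterRatio (α β γ : ℝ) (n : ℕ) (v : ℕ → ℝ) : ℝ :=
  if h : 3 ≤ n then
    ((bipLaw n (numGroups β α n) fun l => pw γ α n (v l))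
        {B | Adj B ⟨0, by omega⟩ ⟨1, by omega⟩ ∧ Adj B ⟨0, by omega⟩ ⟨2, by omega⟩ ∧
             Adj B ⟨1, by omega⟩ ⟨2, by omega⟩}).toReal /
    ((bipLaw n (numGroups β α n) fun l => pw γ α n (v l))
        {B | Adj B ⟨0, by omega⟩ ⟨2, by omega⟩ ∧ Adj B ⟨1, by omega⟩ ⟨2, by omega⟩}).toReal
  else 0

lemma bern_true {q : ℝ} (h1 : q ≤ 1) : bern q {true} = ENNReal.ofReal q := by
  unfold bern
  rw [PMF.toMeasure_apply_singleton _ _ (measurableSet_singleton _), PMF.bernoulli_apply]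
  simp [min_eq_left h1, ENNReal.ofReal]

def Ebig {n m : ℕ} (s : Finset (Fin n × Fin m)) : Set (Fin n → Fin m → Bool) :=
  {B | ∀ q ∈ s, B q.1 q.2 = true}

lemma Ebig_measurable {n m : ℕ} (s : Finset (Fin n × Fin m)) : MeasurableSet (Ebig s) := by
  have : Ebig s = ⋂ q ∈ s, {B : Fin n → Fin m → Bool | B q.1 q.2 = true} := by
    ext B; simp [Ebig]
  rw [this]
  refine MeasurableSet.biInter s.countable_toSet fun q _ => ?_
  have : Measurable (fun B : Fin n → Fin m → Bool => B q.1 q.2) :=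
    (measurable_pi_apply q.2).comp (measurable_pi_apply q.1)
  exact this (measurableSet_singleton true)

lemma Ebig_measure {n m : ℕ} (p : Fin n → ℝ) (s : Finset (Fin n × Fin m))
    (hs : ∀ q ∈ s, p q.1 ≤ 1) :
    bipLaw n m p (Ebig s) = ∏ q ∈ s, ENNReal.ofReal (p q.1) := by
  have hset : Ebig s = Set.pi Set.univ (fun i => Set.pi Set.univ
      (fun a => if (i, a) ∈ s then ({true} : Set Bool) else Set.univ)) := by
    ext B
    simp only [Ebig, Set.mem_setOf_eq, Set.mem_pi, Set.mem_univ, forall_true_left]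
    constructor
    · intro h i a
      by_cases hq : (i, a) ∈ s
      · simp [hq, h (i, a) hq]
      · simp [hq]
    · intro h q hq
      have := h q.1 q.2
      simp [hq] at this
      exact this
  rw [hset, bipLaw, Measure.pi_pi]
  have : ∀ i : Fin n, (Measure.pi fun _ : Fin m => bern (p i)) (Set.pi Set.univ
      (fun a => if (i, a) ∈ s then ({true} : Set Bool) else Set.univ))
      = ∏ a : Fin m, (if (i, a) ∈ s then ENNReal.ofReal (p i) else 1) := by
    intro i
    rw [Measure.pi_pi]
    refine Finset.prod_congr rfl fun a _ => ?_
    by_cases hq : (i, a) ∈ s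
    · simp [hq, bern_true (hs _ hq)]
    · simp only [hq, if_false]
      exact measure_univ
  simp_rw [this]
  rw [← Finset.prod_product', Finset.univ_product_univ, Finset.prod_ite_mem, Finset.univ_inter]

lemma bonferroni {X : Type*} [MeasurableSpace X] (μ : Measure X) {m : ℕ} (T : Fin m → Set X)
    (hT : ∀ a, MeasurableSet (T a)) :
    ∑ a, μ (T a) ≤ μ (⋃ a, T a) + ∑ q ∈ Finset.univ.offDiag, μ (T q.1 ∩ T q.2) := by
  classical
  have hU : MeasurableSet (⋃ a, T a) := MeasurableSet.iUnion hT
  have key : ∀ x, (∑ a, (T a).indicator (1 : X → ENNReal) x) ≤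
      (⋃ a, T a).indicator (1 : X → ENNReal) x +
      ∑ q ∈ Finset.univ.offDiag, (T q.1 ∩ T q.2).indicator (1 : X → ENNReal) x := by
    intro x
    simp only [Set.indicator_apply, Pi.one_apply]
    set k : Finset (Fin m) := Finset.univ.filter (fun a => x ∈ T a) with hk
    have hfilt : (Finset.univ.offDiag.filter (fun q : Fin m × Fin m => x ∈ T q.1 ∩ T q.2))
        = k.offDiag := by
      ext q
      simp [Finset.mem_offDiag, hk, Finset.mem_filter]
      tauto
    rw [Finset.sum_boole]
    have h2 : (∑ q ∈ Finset.univ.offDiag,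
        if x ∈ T q.1 ∩ T q.2 then (1:ENNReal) else 0) = (k.offDiag.card : ENNReal) := by
      rw [Finset.sum_boole, hfilt]
    rw [h2]
    by_cases hx : x ∈ ⋃ a, T a
    · simp only [hx, if_true]
      rw [Finset.offDiag_card]
      have : k.card ≤ 1 + (k.card * k.card - k.card) := by
        rcases Nat.eq_zero_or_pos k.card with h | h
        · simp [h]
        · obtain ⟨j, hj⟩ := Nat.exists_eq_add_of_le h
          rw [hj]
          have heq : (1 + j) * (1 + j) - (1 + j) = (1 + j) * j := by
            rw [Nat.mul_add, Nat.mul_one, Nat.add_sub_cancel_left]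
          rw [heq]
          exact Nat.add_le_add_left (Nat.le_mul_of_pos_left j (by omega)) 1
      calc (k.card : ENNReal) ≤ ((1 + (k.card * k.card - k.card) : ℕ) : ENNReal) :=
            Nat.cast_le.mpr this
        _ = 1 + ((k.card * k.card - k.card : ℕ) : ENNReal) := by push_cast; ring
    · have hempty : k = ∅ := by
        rw [Finset.eq_empty_iff_forall_notMem]
        intro a ha
        exact hx (Set.mem_iUnion.mpr ⟨a, (Finset.mem_filter.mp ha).2⟩)
      rw [← hk, hempty]
      simp
  calc ∑ a, μ (T a) = ∑ a, ∫⁻ x, (T a).indicator (1 : X → ENNReal) x ∂μ := by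
        refine Finset.sum_congr rfl fun a _ => ?_
        rw [lintegral_indicator_one (hT a)]
    _ = ∫⁻ x, ∑ a, (T a).indicator (1 : X → ENNReal) x ∂μ :=
        (lintegral_finset_sum _ fun a _ => (measurable_one.indicator (hT a))).symm
    _ ≤ ∫⁻ x, ((⋃ a, T a).indicator (1 : X → ENNReal) x +
        ∑ q ∈ Finset.univ.offDiag, (T q.1 ∩ T q.2).indicator (1 : X → ENNReal) x) ∂μ :=
        lintegral_mono key
    _ = μ (⋃ a, T a) + ∑ q ∈ Finset.univ.offDiag, μ (T q.1 ∩ T q.2) := by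
        rw [lintegral_add_left (measurable_one.indicator hU),
          lintegral_finset_sum _ (fun q _ => measurable_one.indicator ((hT q.1).inter (hT q.2))),
          lintegral_indicator_one hU]
        congr 1
        refine Finset.sum_congr rfl fun q _ => ?_
        rw [lintegral_indicator_one ((hT q.1).inter (hT q.2))]

lemma Ebig_inter {n m : ℕ} (s t : Finset (Fin n × Fin m)) :
    Ebig s ∩ Ebig t = Ebig (s ∪ t) := by
  ext B; simp only [Ebig, Set.mem_inter_iff, Set.mem_setOf_eq, Finset.mem_union]
  constructor
  · rintro ⟨h1, h2⟩ q (hq | hq); exacts [h1 q hq, h2 q hq]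
  · intro h; exact ⟨fun q hq => h q (Or.inl hq), fun q hq => h q (Or.inr hq)⟩

lemma ratio_bound {n m : ℕ} (hn : 3 ≤ n) (hm : 1 ≤ m) (p : Fin n → ℝ)
    (hp0 : 0 < p ⟨0, by omega⟩) (hp1 : 0 < p ⟨1, by omega⟩) (hp2 : 0 < p ⟨2, by omega⟩)
    (h0' : p ⟨0, by omega⟩ ≤ 1) (h1' : p ⟨1, by omega⟩ ≤ 1) (h2' : p ⟨2, by omega⟩ ≤ 1)
    (hmt : (m : ℝ) * (p ⟨0, by omega⟩ * p ⟨1, by omega⟩ * p ⟨2, by omega⟩) ≤ 1 / 2) :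
    |((bipLaw n m p)
        {B | Adj B ⟨0, by omega⟩ ⟨1, by omega⟩ ∧ Adj B ⟨0, by omega⟩ ⟨2, by omega⟩ ∧
             Adj B ⟨1, by omega⟩ ⟨2, by omega⟩}).toReal /
      ((bipLaw n m p)
        {B | Adj B ⟨0, by omega⟩ ⟨2, by omega⟩ ∧ Adj B ⟨1, by omega⟩ ⟨2, by omega⟩}).toReal - 1|
      ≤ 4 * m * p ⟨2, by omega⟩ := by
  classical
  set i0 : Fin n := ⟨0, by omega⟩
  set i1 : Fin n := ⟨1, by omega⟩
  set i2 : Fin n := ⟨2, by omega⟩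
  set μ := bipLaw n m p with hμ
  set p0 := p i0; set p1 := p i1; set p2 := p i2
  set t : ℝ := p0 * p1 * p2 with ht
  have ht0 : 0 < t := by positivity
  have hi01 : i0 ≠ i1 := by simp [i0, i1, Fin.ext_iff]
  have hi02 : i0 ≠ i2 := by simp [i0, i2, Fin.ext_iff]
  have hi12 : i1 ≠ i2 := by simp [i1, i2, Fin.ext_iff]
  set T : Fin m → Set (Fin n → Fin m → Bool) :=
    fun a => Ebig {(i0, a), (i1, a), (i2, a)} with hTdef
  set Pr : Fin m × Fin m → Set (Fin n → Fin m → Bool) :=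
    fun q => Ebig {(i0, q.1), (i2, q.1), (i1, q.2), (i2, q.2)} with hPrdef
  have hple : ∀ i : Fin n, i = i0 ∨ i = i1 ∨ i = i2 → p i ≤ 1 := by
    rintro i (rfl | rfl | rfl) <;> assumption
  have hT : ∀ a, μ (T a) = ENNReal.ofReal t := by
    intro a
    rw [hTdef, hμ, Ebig_measure]
    · rw [Finset.prod_insert (by simp [Prod.ext_iff, hi01, hi02]),
        Finset.prod_insert (by simp [Prod.ext_iff, hi12]), Finset.prod_singleton,
        ← ENNReal.ofReal_mul hp1.le, ← ENNReal.ofReal_mul hp0.le, ht, mul_assoc]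
    · rintro q hq
      simp only [Finset.mem_insert, Finset.mem_singleton] at hq
      rcases hq with rfl | rfl | rfl <;> assumption
  have hTT : ∀ a b, a ≠ b → μ (T a ∩ T b) = ENNReal.ofReal t * ENNReal.ofReal t := by
    intro a b hab
    rw [hTdef]
    simp only
    rw [Ebig_inter, hμ, Ebig_measure]
    · rw [Finset.prod_union (by
        simp only [Finset.disjoint_left, Finset.mem_insert, Finset.mem_singleton]
        rintro q (rfl | rfl | rfl) <;> simp [Prod.ext_iff, hab])]
      congr 1 <;>
      · rw [Finset.prod_insert (by simp [Prod.ext_iff, hi01, hi02]),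
          Finset.prod_insert (by simp [Prod.ext_iff, hi12]), Finset.prod_singleton,
          ← ENNReal.ofReal_mul hp1.le, ← ENNReal.ofReal_mul hp0.le, ht, mul_assoc]
    · rintro q hq
      simp only [Finset.mem_union, Finset.mem_insert, Finset.mem_singleton] at hq
      rcases hq with (rfl | rfl | rfl) | (rfl | rfl | rfl) <;> assumption
  have hPair : ∀ a b : Fin m, a ≠ b → μ (Pr (a, b)) = ENNReal.ofReal (t * p2) := by
    intro a b hab
    rw [hPrdef, hμ]
    simp only
    rw [Ebig_measure]
    · rw [Finset.prod_insert (by simp [Prod.ext_iff, hi01, hi02, hab]),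
        Finset.prod_insert (by simp [Prod.ext_iff, hi12, hab, Ne.symm hab]),
        Finset.prod_insert (by simp [Prod.ext_iff, hi12]), Finset.prod_singleton]
      rw [show t * p2 = p0 * (p2 * (p1 * p2)) by ring,
        ENNReal.ofReal_mul hp0.le, ENNReal.ofReal_mul hp2.le, ENNReal.ofReal_mul hp1.le]
    · rintro q hq
      simp only [Finset.mem_insert, Finset.mem_singleton] at hq
      rcases hq with rfl | rfl | rfl | rfl <;> assumption
  set Num := {B : Fin n → Fin m → Bool | Adj B i0 i1 ∧ Adj B i0 i2 ∧ Adj B i1 i2} with hNumdef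
  set Den := {B : Fin n → Fin m → Bool | Adj B i0 i2 ∧ Adj B i1 i2} with hDendef
  have hTsubNum : ∀ a, T a ⊆ Num := by
    intro a B hB
    simp only [hTdef, Ebig, Set.mem_setOf_eq] at hB
    have h0 : B i0 a = true := hB (i0, a) (by simp)
    have h1 : B i1 a = true := hB (i1, a) (by simp)
    have h2 : B i2 a = true := hB (i2, a) (by simp)
    exact ⟨⟨a, h0, h1⟩, ⟨a, h0, h2⟩, ⟨a, h1, h2⟩⟩
  have hNumsubDen : Num ⊆ Den := fun B hB => ⟨hB.2.1, hB.2.2⟩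
  have hDsub : Den ⊆ (⋃ a, T a) ∪ (⋃ q ∈ Finset.univ.offDiag, Pr q) := by
    rintro B ⟨⟨a, ha0, ha2⟩, ⟨b, hb1, hb2⟩⟩
    by_cases hab : a = b
    · subst hab
      left
      refine Set.mem_iUnion.mpr ⟨a, ?_⟩
      intro q hq
      simp only [Finset.mem_insert, Finset.mem_singleton] at hq
      rcases hq with rfl | rfl | rfl
      exacts [ha0, hb1, ha2]
    · right
      refine Set.mem_iUnion₂.mpr ⟨(a, b), Finset.mem_offDiag.mpr ⟨Finset.mem_univ _, Finset.mem_univ _, hab⟩, ?_⟩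
      intro q hq
      simp only [Finset.mem_insert, Finset.mem_singleton] at hq
      rcases hq with rfl | rfl | rfl | rfl
      exacts [ha0, ha2, hb1, hb2]
  have hbon := bonferroni μ T (fun a => Ebig_measurable _)
  have hsum1 : ∑ a : Fin m, μ (T a) = (m : ENNReal) * ENNReal.ofReal t := by
    simp [hT, Finset.card_univ]
  have hsum2 : ∑ q ∈ Finset.univ.offDiag, μ (T q.1 ∩ T q.2)
      ≤ (m : ENNReal) * (m : ENNReal) * (ENNReal.ofReal t * ENNReal.ofReal t) := by
    rw [Finset.sum_congr rfl (fun q hq => hTT q.1 q.2 (Finset.mem_offDiag.mp hq).2.2),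
      Finset.sum_const, nsmul_eq_mul]
    refine mul_le_mul_left ?_ _
    rw [← Nat.cast_mul, Nat.cast_le, Finset.offDiag_card, Finset.card_univ, Fintype.card_fin]
    omega
  have hNumLB : ENNReal.ofReal ((m:ℝ) * t) ≤ μ Num + ENNReal.ofReal ((m:ℝ)*(m:ℝ)*(t*t)) := by
    have e1 : ENNReal.ofReal ((m:ℝ) * t) = (m : ENNReal) * ENNReal.ofReal t := by
      rw [ENNReal.ofReal_mul (Nat.cast_nonneg m), ENNReal.ofReal_natCast]
    have e2 : ENNReal.ofReal ((m:ℝ)*(m:ℝ)*(t*t)) =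
        (m : ENNReal) * (m : ENNReal) * (ENNReal.ofReal t * ENNReal.ofReal t) := by
      rw [show (m:ℝ)*(m:ℝ)*(t*t) = ((m:ℝ)*t) * ((m:ℝ)*t) by ring,
        ENNReal.ofReal_mul (by positivity), e1]
      ring
    rw [e1, e2]
    calc (m : ENNReal) * ENNReal.ofReal t = ∑ a : Fin m, μ (T a) := hsum1.symm
      _ ≤ μ (⋃ a, T a) + ∑ q ∈ Finset.univ.offDiag, μ (T q.1 ∩ T q.2) := hbon
      _ ≤ μ Num + (m : ENNReal) * (m : ENNReal) * (ENNReal.ofReal t * ENNReal.ofReal t) :=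
          add_le_add (measure_mono (Set.iUnion_subset hTsubNum)) hsum2
  have hDenUB : μ Den ≤ ENNReal.ofReal ((m:ℝ) * t) + ENNReal.ofReal ((m:ℝ)*(m:ℝ)*(t*p2)) := by
    have e1 : ENNReal.ofReal ((m:ℝ) * t) = (m : ENNReal) * ENNReal.ofReal t := by
      rw [ENNReal.ofReal_mul (Nat.cast_nonneg m), ENNReal.ofReal_natCast]
    have e3 : ENNReal.ofReal ((m:ℝ)*(m:ℝ)*(t*p2)) =
        (m : ENNReal) * (m : ENNReal) * ENNReal.ofReal (t * p2) := by
      rw [show (m:ℝ)*(m:ℝ)*(t*p2) = (m:ℝ)*((m:ℝ)*(t*p2)) by ring,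
        ENNReal.ofReal_mul (Nat.cast_nonneg m), ENNReal.ofReal_mul (Nat.cast_nonneg m),
        ENNReal.ofReal_natCast, ← mul_assoc]
    rw [e1, e3]
    have hU2 : (⋃ a, T a) = ⋃ a ∈ (Finset.univ : Finset (Fin m)), T a := by simp
    calc μ Den ≤ μ ((⋃ a, T a) ∪ (⋃ q ∈ Finset.univ.offDiag, Pr q)) := measure_mono hDsub
      _ ≤ μ (⋃ a, T a) + μ (⋃ q ∈ Finset.univ.offDiag, Pr q) := measure_union_le _ _
      _ ≤ (∑ a : Fin m, μ (T a)) + ∑ q ∈ Finset.univ.offDiag, μ (Pr q) := by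
          refine add_le_add ?_ (measure_biUnion_finset_le _ _)
          rw [hU2]
          exact (measure_biUnion_finset_le _ _).trans (le_of_eq rfl)
      _ ≤ (m : ENNReal) * ENNReal.ofReal t + (m : ENNReal) * (m : ENNReal) * ENNReal.ofReal (t * p2) := by
          refine add_le_add (le_of_eq hsum1) ?_
          have hsc : ∑ q ∈ Finset.univ.offDiag, μ (Pr q)
              = ∑ _q ∈ Finset.univ.offDiag, ENNReal.ofReal (t * p2) :=
            Finset.sum_congr rfl (fun q hq => by
              rcases q with ⟨a, b⟩
              exact hPair a b (Finset.mem_offDiag.mp hq).2.2)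
          rw [hsc, Finset.sum_const, nsmul_eq_mul]
          refine mul_le_mul_left ?_ _
          rw [← Nat.cast_mul, Nat.cast_le, Finset.offDiag_card, Finset.card_univ, Fintype.card_fin]
          omega
  -- pass to real numbers
  set N := (μ Num).toReal with hN
  set D := (μ Den).toReal with hD
  have hNfin : μ Num ≠ ⊤ := measure_ne_top μ _
  have hDfin : μ Den ≠ ⊤ := measure_ne_top μ _
  have hNR : (m:ℝ) * t ≤ N + (m:ℝ)*(m:ℝ)*(t*t) := by
    have h := hNumLB
    rw [← ENNReal.ofReal_toReal hNfin, ← ENNReal.ofReal_add ENNReal.toReal_nonneg (by positivity)] at h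
    exact (ENNReal.ofReal_le_ofReal_iff (add_nonneg ENNReal.toReal_nonneg (by positivity))).mp h
  have hDR : D ≤ (m:ℝ) * t + (m:ℝ)*(m:ℝ)*(t*p2) := by
    have h := hDenUB
    rw [← ENNReal.ofReal_add (by positivity) (by positivity)] at h
    have := ENNReal.toReal_mono ENNReal.ofReal_ne_top h
    rwa [ENNReal.toReal_ofReal (by positivity)] at this
  have hND : N ≤ D := ENNReal.toReal_mono hDfin (measure_mono hNumsubDen)
  have hN0 : 0 ≤ N := ENNReal.toReal_nonneg
  have hmR : (1:ℝ) ≤ (m:ℝ) := by exact_mod_cast hm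
  have hNpos : (m:ℝ) * t / 2 ≤ N := by nlinarith [hNR, hmt, ht0]
  have hDpos : (0:ℝ) < D := lt_of_lt_of_le (by positivity) (le_trans hNpos hND)
  have hq1 : N / D ≤ 1 := (div_le_one hDpos).mpr hND
  have ht_le : t ≤ p2 := by nlinarith [mul_le_one₀ h0' hp1.le h1', hp2.le]
  rw [abs_of_nonpos (by linarith)]
  have hgoal : D - N ≤ 4 * (m:ℝ) * p2 * D := by
    have h1 : D - N ≤ (m:ℝ)*(m:ℝ)*(t*p2) + (m:ℝ)*(m:ℝ)*(t*t) := by linarith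
    have h2 : (m:ℝ)*(m:ℝ)*(t*t) ≤ (m:ℝ)*(m:ℝ)*(t*p2) := by nlinarith [ht0.le]
    have h3 : 4 * (m:ℝ) * p2 * ((m:ℝ) * t / 2) ≤ 4 * (m:ℝ) * p2 * D :=
      mul_le_mul_of_nonneg_left (hNpos.trans hND) (by positivity)
    nlinarith
  have h4 : (D - N) / D ≤ 4 * (m:ℝ) * p2 := (div_le_iff₀ hDpos).mpr hgoal
  have h5 : 1 - N / D = (D - N) / D := by field_simp
  linarith

lemma det_bound (α β γ : ℝ) (hγ : 0 < γ) (n : ℕ) (hn : 3 ≤ n)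
    (hm : 1 ≤ numGroups β α n) (v : ℕ → ℝ)
    (h0 : 0 < v 0) (h1 : 0 < v 1) (h2 : 0 < v 2)
    (hmt : (numGroups β α n : ℝ) *
      (γ * v 0 * (n:ℝ) ^ (-(1 + α) / 2) * (γ * v 1 * (n:ℝ) ^ (-(1 + α) / 2)) *
        (γ * v 2 * (n:ℝ) ^ (-(1 + α) / 2))) ≤ 1 / 2) :
    |clusterRatio α β γ n v - 1| ≤
      4 * (numGroups β α n : ℝ) * (γ * v 2 * (n:ℝ) ^ (-(1 + α) / 2)) := by
  have hnpos : (0:ℝ) < (n:ℝ) := by exact_mod_cast (show 0 < n by omega)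
  have hr : (0:ℝ) < (n:ℝ) ^ (-(1 + α) / 2) := Real.rpow_pos_of_pos hnpos _
  have hpw_pos : ∀ w : ℝ, 0 < w → 0 < pw γ α n w := fun w hw =>
    lt_min (by positivity) one_pos
  have hpw_le_one : ∀ w : ℝ, pw γ α n w ≤ 1 := fun w => min_le_right _ _
  have hpw_le : ∀ w : ℝ, pw γ α n w ≤ γ * w * (n:ℝ) ^ (-(1 + α) / 2) := fun w =>
    min_le_left _ _
  unfold clusterRatio
  rw [dif_pos hn]
  have key := ratio_bound (m := numGroups β α n) hn hm (fun l => pw γ α n (v l))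
    (hpw_pos _ h0) (hpw_pos _ h1) (hpw_pos _ h2)
    (hpw_le_one _) (hpw_le_one _) (hpw_le_one _) ?hmt
  case hmt =>
    refine le_trans ?_ hmt
    have e0 := hpw_le (v 0); have e1 := hpw_le (v 1); have e2 := hpw_le (v 2)
    have q0 := (hpw_pos _ h0).le; have q1 := (hpw_pos _ h1).le; have q2 := (hpw_pos _ h2).le
    have hM : (0:ℝ) ≤ (numGroups β α n : ℝ) := Nat.cast_nonneg _
    refine mul_le_mul_of_nonneg_left ?_ hM
    refine mul_le_mul (mul_le_mul e0 e1 q1 (by positivity)) e2 q2 (by positivity)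
  refine le_trans key ?_
  have e2 := hpw_le (v 2)
  have h4 : (0:ℝ) ≤ 4 * (numGroups β α n : ℝ) := by positivity
  exact mul_le_mul_of_nonneg_left e2 h4

lemma tail_tendsto {Ω : Type*} [MeasurableSpace Ω] (P : Measure Ω) [IsProbabilityMeasure P]
    (Y : Ω → ℝ) (hY : Measurable Y) (r : ℕ → ℝ) (hr : Tendsto r atTop atTop) :
    Tendsto (fun n => P {ω | r n ≤ Y ω}) atTop (nhds 0) := by
  have hmeas : ∀ K : ℕ, MeasurableSet {ω | (K:ℝ) ≤ Y ω} := fun K =>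
    measurableSet_le measurable_const hY
  have hanti : Antitone (fun K : ℕ => {ω | (K:ℝ) ≤ Y ω}) := by
    intro K L hKL ω hω
    exact le_trans (show (K:ℝ) ≤ (L:ℝ) by exact_mod_cast hKL) hω
  have hlim := tendsto_measure_iInter_atTop (μ := P)
    (fun K => (hmeas K).nullMeasurableSet) hanti ⟨0, measure_ne_top _ _⟩
  have hempty : (⋂ K : ℕ, {ω | (K:ℝ) ≤ Y ω}) = ∅ := by
    ext ω
    simp only [Set.mem_iInter, Set.mem_setOf_eq, Set.mem_empty_iff_false, iff_false, not_forall]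
    obtain ⟨K, hK⟩ := exists_nat_gt (Y ω)
    exact ⟨K, not_le.mpr hK⟩
  rw [hempty, measure_empty] at hlim
  rw [ENNReal.tendsto_atTop_zero] at hlim ⊢
  intro δ hδ
  obtain ⟨K, hK⟩ := hlim δ hδ
  obtain ⟨N, hN⟩ := (Filter.eventually_atTop).mp (hr.eventually_ge_atTop (K:ℝ))
  refine ⟨N, fun n hn => ?_⟩
  refine le_trans (measure_mono ?_) (hK K le_rfl)
  intro ω hω
  exact le_trans (hN n hn) hω

/-- Theorem 2(a): in the random intersection graph `G(n,m,F)` with `m = ⌊β n^α⌋` and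
`p_i = min(γ W_i n^{-(1+α)/2}, 1)`, if `F` has finite mean and `α < 1`, then the
conditional clustering coefficient `c̄_{i,j,k}^{(n)}` converges to `1` in probability
as `n → ∞`. -/
theorem clustering_alpha_lt_one {Ω : Type*} [MeasurableSpace Ω]
    (P : Measure Ω) [IsProbabilityMeasure P]
    (α β γ : ℝ) (hα : 0 < α) (hα1 : α < 1) (hβ : 0 < β) (hγ : 0 < γ)
    (F : Measure ℝ) [IsProbabilityMeasure F]
    (hFpos : F (Set.Iic 0) = 0)
    (hFint : Integrable (fun x => x) F) (hFmean : ∫ x, x ∂F = 1)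
    (W : ℕ → Ω → ℝ) (hWmeas : ∀ i, Measurable (W i))
    (hWdist : ∀ i, Measure.map (W i) P = F)
    (hWindep : iIndepFun W P) :
    ∀ ε : ℝ, 0 < ε →
      Tendsto (fun n => P {ω | ε ≤ |clusterRatio α β γ n (fun l => W l ω) - 1|})
        atTop (nhds 0) := by
  intro ε hε
  -- thresholds
  set r1 : ℕ → ℝ := fun n => (n:ℝ) ^ ((3 + α) / 2) / (2 * β) with hr1def
  set r2 : ℕ → ℝ := fun n => ε * (n:ℝ) ^ ((1 - α) / 2) / (8 * β) with hr2def
  have hr1 : Tendsto r1 atTop atTop := by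
    refine Tendsto.atTop_div_const (by positivity) ?_
    exact (tendsto_rpow_atTop (by positivity)).comp tendsto_natCast_atTop_atTop
  have hr2 : Tendsto r2 atTop atTop := by
    refine Tendsto.atTop_div_const (by positivity) ?_
    refine Tendsto.const_mul_atTop hε ?_
    exact (tendsto_rpow_atTop (by linarith)).comp tendsto_natCast_atTop_atTop
  -- null sets
  have hWnull : ∀ l : ℕ, P {ω | W l ω ≤ 0} = 0 := by
    intro l
    have h1 : {ω | W l ω ≤ 0} = W l ⁻¹' (Set.Iic 0) := rfl
    rw [h1, ← Measure.map_apply (hWmeas l) measurableSet_Iic, hWdist l]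
    exact hFpos
  -- tail measures
  have hY1 : Measurable (fun ω => γ ^ 3 * (W 0 ω * W 1 ω * W 2 ω)) :=
    (((hWmeas 0).mul (hWmeas 1)).mul (hWmeas 2)).const_mul _
  have hY2 : Measurable (fun ω => γ * W 2 ω) := (hWmeas 2).const_mul _
  have hT4 := tail_tendsto P _ hY1 r1 hr1
  have hT5 := tail_tendsto P _ hY2 r2 hr2
  have hsum : Tendsto (fun n => P {ω | r1 n ≤ γ ^ 3 * (W 0 ω * W 1 ω * W 2 ω)}
      + P {ω | r2 n ≤ γ * W 2 ω}) atTop (nhds 0) := by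
    simpa using hT4.add hT5
  -- eventual deterministic conditions
  have htα : Tendsto (fun n : ℕ => β * (n:ℝ) ^ α) atTop atTop :=
    Tendsto.const_mul_atTop hβ ((tendsto_rpow_atTop hα).comp tendsto_natCast_atTop_atTop)
  have hng : ∀ᶠ n : ℕ in atTop, 1 ≤ numGroups β α n := by
    filter_upwards [htα.eventually_ge_atTop 1] with n hn
    exact Nat.le_floor (by exact_mod_cast hn)
  have hn3 : ∀ᶠ n : ℕ in atTop, 3 ≤ n := eventually_ge_atTop 3
  -- main bound
  have hbound : ∀ᶠ n : ℕ in atTop,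
      P {ω | ε ≤ |clusterRatio α β γ n (fun l => W l ω) - 1|} ≤
        P {ω | r1 n ≤ γ ^ 3 * (W 0 ω * W 1 ω * W 2 ω)} + P {ω | r2 n ≤ γ * W 2 ω} := by
    filter_upwards [hng, hn3] with n hm hn
    have hX : (0:ℝ) < (n:ℝ) := by exact_mod_cast (show 0 < n by omega)
    set X := (n:ℝ) with hXdef
    set R := X ^ (-(1 + α) / 2) with hRdef
    have hR : 0 < R := Real.rpow_pos_of_pos hX _
    have hsubset : {ω | ε ≤ |clusterRatio α β γ n (fun l => W l ω) - 1|} ⊆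
        ({ω | W 0 ω ≤ 0} ∪ {ω | W 1 ω ≤ 0} ∪ {ω | W 2 ω ≤ 0}) ∪
        ({ω | r1 n ≤ γ ^ 3 * (W 0 ω * W 1 ω * W 2 ω)} ∪ {ω | r2 n ≤ γ * W 2 ω}) := by
      intro ω hω
      by_contra hbad
      simp only [Set.mem_union, Set.mem_setOf_eq, not_or, not_le] at hbad
      obtain ⟨⟨⟨h0, h1⟩, h2⟩, h4, h5⟩ := hbad
      have hfloor : (numGroups β α n : ℝ) ≤ β * X ^ α := Nat.floor_le (by positivity)
      have hMnn : (0:ℝ) ≤ (numGroups β α n : ℝ) := Nat.cast_nonneg _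
      have hprod1 : X ^ α * (X ^ ((3 + α) / 2) * (R * R * R)) = 1 := by
        calc X ^ α * (X ^ ((3 + α) / 2) * (R * R * R))
            = X ^ (α + (3 + α) / 2 + (-(1 + α) / 2 + -(1 + α) / 2 + -(1 + α) / 2)) := by
              rw [hRdef]; simp only [← Real.rpow_add hX]; ring_nf
          _ = 1 := by
              rw [show α + (3 + α) / 2 + (-(1 + α) / 2 + -(1 + α) / 2 + -(1 + α) / 2) = 0 by ring,
                Real.rpow_zero]
      have hprod2 : X ^ α * (X ^ ((1 - α) / 2) * R) = 1 := by
        calc X ^ α * (X ^ ((1 - α) / 2) * R)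
            = X ^ (α + (1 - α) / 2 + -(1 + α) / 2) := by
              rw [hRdef]; simp only [← Real.rpow_add hX]; ring_nf
          _ = 1 := by
              rw [show α + (1 - α) / 2 + -(1 + α) / 2 = 0 by ring, Real.rpow_zero]
      have hmt : (numGroups β α n : ℝ) *
          (γ * W 0 ω * R * (γ * W 1 ω * R) * (γ * W 2 ω * R)) ≤ 1 / 2 := by
        have hA : (0:ℝ) ≤ γ ^ 3 * (W 0 ω * W 1 ω * W 2 ω) := by positivity
        calc (numGroups β α n : ℝ) * (γ * W 0 ω * R * (γ * W 1 ω * R) * (γ * W 2 ω * R))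
            = (numGroups β α n : ℝ) * ((γ ^ 3 * (W 0 ω * W 1 ω * W 2 ω)) * (R * R * R)) := by
              ring
          _ ≤ (β * X ^ α) * ((γ ^ 3 * (W 0 ω * W 1 ω * W 2 ω)) * (R * R * R)) :=
              mul_le_mul_of_nonneg_right hfloor (by positivity)
          _ ≤ (β * X ^ α) * (r1 n * (R * R * R)) := by
              refine mul_le_mul_of_nonneg_left ?_ (by positivity)
              exact mul_le_mul_of_nonneg_right h4.le (by positivity)
          _ = 1 / 2 := by
              rw [hr1def]
              rw [show β * X ^ α * (X ^ ((3 + α) / 2) / (2 * β) * (R * R * R))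
                = (X ^ α * (X ^ ((3 + α) / 2) * (R * R * R))) * (β / (2 * β)) by ring, hprod1,
                one_mul, mul_comm 2 β, div_mul_eq_div_div, div_self hβ.ne', one_div]
      have hdb := det_bound α β γ hγ n hn hm (fun l => W l ω) h0 h1 h2 hmt
      have hfinal : 4 * (numGroups β α n : ℝ) * (γ * W 2 ω * R) ≤ ε / 2 := by
        calc 4 * (numGroups β α n : ℝ) * (γ * W 2 ω * R)
            ≤ 4 * (β * X ^ α) * (γ * W 2 ω * R) := by
              refine mul_le_mul_of_nonneg_right ?_ (by positivity)
              linarith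
          _ ≤ 4 * (β * X ^ α) * (r2 n * R) := by
              refine mul_le_mul_of_nonneg_left ?_ (by positivity)
              exact mul_le_mul_of_nonneg_right h5.le hR.le
          _ = ε / 2 := by
              rw [hr2def]
              rw [show 4 * (β * X ^ α) * (ε * X ^ ((1 - α) / 2) / (8 * β) * R)
                = ε * (X ^ α * (X ^ ((1 - α) / 2) * R)) * ((4 * β) / (8 * β)) by ring, hprod2,
                mul_one]
              rw [show (4 * β) / (8 * β) = (1 : ℝ) / 2 by
                rw [div_eq_div_iff (by positivity) (by norm_num)]; ring]
              ring
      have : |clusterRatio α β γ n (fun l => W l ω) - 1| < ε := by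
        calc |clusterRatio α β γ n (fun l => W l ω) - 1|
            ≤ 4 * (numGroups β α n : ℝ) * (γ * W 2 ω * R) := hdb
          _ ≤ ε / 2 := hfinal
          _ < ε := by linarith
      exact absurd hω (not_le.mpr this)
    calc P {ω | ε ≤ |clusterRatio α β γ n (fun l => W l ω) - 1|}
        ≤ P (({ω | W 0 ω ≤ 0} ∪ {ω | W 1 ω ≤ 0} ∪ {ω | W 2 ω ≤ 0}) ∪
            ({ω | r1 n ≤ γ ^ 3 * (W 0 ω * W 1 ω * W 2 ω)} ∪ {ω | r2 n ≤ γ * W 2 ω})) :=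
          measure_mono hsubset
      _ ≤ P ({ω | W 0 ω ≤ 0} ∪ {ω | W 1 ω ≤ 0} ∪ {ω | W 2 ω ≤ 0}) +
          P ({ω | r1 n ≤ γ ^ 3 * (W 0 ω * W 1 ω * W 2 ω)} ∪ {ω | r2 n ≤ γ * W 2 ω}) :=
          measure_union_le _ _
      _ ≤ 0 + (P {ω | r1 n ≤ γ ^ 3 * (W 0 ω * W 1 ω * W 2 ω)} + P {ω | r2 n ≤ γ * W 2 ω}) := by
          refine add_le_add ?_ (measure_union_le _ _)
          refine le_of_eq ?_
          refine measure_union_null (measure_union_null (hWnull 0) (hWnull 1)) (hWnull 2)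
      _ = P {ω | r1 n ≤ γ ^ 3 * (W 0 ω * W 1 ω * W 2 ω)} + P {ω | r2 n ≤ γ * W 2 ω} := by
          rw [zero_add]
  exact tendsto_of_tendsto_of_tendsto_of_le_of_le' tendsto_const_nhds hsum
    (Eventually.of_forall fun n => zero_le) hbound
end
end

section
/- In the random intersection graph G(n,m,F) with m = ⌊βn^α⌋ and p_i = min(γ W_i n^{-(1+α)/2}, 1), if F has finite mean and α = 1, then for any three distinct vertices i, j, k the conditional clustering coefficient c̄_{i,j,k}^{(n)} = P̄_n(E_{ij} | E_{ik}, E_{jk}) converges to (1 + βγW_k)^{-1} in probability as n → ∞. -/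
open MeasureTheory ProbabilityTheory Filter Real

noncomputable section

namespace ClusterAux

open Finset ENNReal Topology

lemma bern_apply_true (p : ℝ) : bern p {true} = ENNReal.ofReal (min p 1) := by
  unfold bern
  rw [PMF.toMeasure_apply_singleton _ _ (measurableSet_singleton _)]
  rfl

lemma bern_apply_false (p : ℝ) : bern p {false} = 1 - ENNReal.ofReal (min p 1) := by
  unfold bern
  rw [PMF.toMeasure_apply_singleton _ _ (measurableSet_singleton _)]
  simp [PMF.bernoulli_apply, ENNReal.ofReal, ENNReal.coe_sub]

lemma bern_sum (p : ℝ) : ∑ b : Bool, bern p {b} = 1 := by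
  have h := measure_univ (μ := bern p)
  rw [show (Set.univ : Set Bool) = {false} ∪ {true} by ext b; cases b <;> simp] at h
  rw [measure_union (by simp) (measurableSet_singleton _)] at h
  rw [Fintype.sum_bool, add_comm]
  exact h

lemma measure_eq_sum {Ω : Type*} [Fintype Ω] [MeasurableSpace Ω] [MeasurableSingletonClass Ω]
    (μ : Measure Ω) (S : Set Ω) [DecidablePred (· ∈ S)] :
    μ S = ∑ x ∈ Finset.univ.filter (fun x => x ∈ S), μ {x} := by
  have hS : S = ⋃ x ∈ Finset.univ.filter (fun x => x ∈ S), ({x} : Set Ω) := by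
    ext y; simp
  conv_lhs => rw [hS]
  rw [measure_biUnion_finset ?_ (fun _ _ => measurableSet_singleton _)]
  intro x _ y _ hxy
  simp [Set.disjoint_singleton, hxy]

lemma bipLaw_singleton (n m : ℕ) (p : Fin n → ℝ) (B : Fin n → Fin m → Bool) :
    bipLaw n m p {B} = ∏ l : Fin n, ∏ a : Fin m, bern (p l) {B l a} := by
  unfold bipLaw
  rw [← Set.univ_pi_singleton B, Measure.pi_pi]
  refine Finset.prod_congr rfl fun l _ => ?_
  rw [← Set.univ_pi_singleton (B l), Measure.pi_pi]

lemma prod_three {M : Type*} [CommMonoid M] {ι : Type*} [Fintype ι] [DecidableEq ι]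
    (i j k : ι) (hij : i ≠ j) (hik : i ≠ k) (hjk : j ≠ k) (A B C : M) :
    (∏ l : ι, (if l = i then A else if l = j then B else if l = k then C else 1)) = A * B * C := by
  rw [← Finset.prod_subset (Finset.subset_univ ({i, j, k} : Finset ι))
    (fun x _ hx => by
      simp only [Finset.mem_insert, Finset.mem_singleton, not_or] at hx
      simp [hx.1, hx.2.1, hx.2.2])]
  rw [Finset.prod_insert (by simp [hij, hik]), Finset.prod_insert (by simp [hjk]),
    Finset.prod_singleton]
  simp [Ne.symm hij, Ne.symm hik, Ne.symm hjk, hij, hik, hjk]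
  rw [mul_assoc]

set_option maxHeartbeats 1000000 in
lemma column_sum (n : ℕ) (p : Fin n → ℝ) (i j k : Fin n)
    (hij : i ≠ j) (hik : i ≠ k) (hjk : j ≠ k) (φ : Bool → Bool → Bool → Bool) :
    (∑ col : Fin n → Bool, (if φ (col i) (col j) (col k) = true then 1 else 0) *
        ∏ l : Fin n, bern (p l) {col l})
      = ∑ x : Bool, ∑ y : Bool, ∑ z : Bool,
          (if φ x y z = true then bern (p i) {x} * bern (p j) {y} * bern (p k) {z} else 0) := by
  classical
  have collapse : ∀ col : Fin n → Bool,
      (if φ (col i) (col j) (col k) = true then (1:ℝ≥0∞) else 0) *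
          ∏ l : Fin n, bern (p l) {col l}
        = ∑ x : Bool, ∑ y : Bool, ∑ z : Bool,
            (if col i = x then (1:ℝ≥0∞) else 0) * ((if col j = y then (1:ℝ≥0∞) else 0) *
              ((if col k = z then (1:ℝ≥0∞) else 0) *
                ((if φ x y z = true then (1:ℝ≥0∞) else 0) *
                  ∏ l : Fin n, bern (p l) {col l}))) := by
    intro col
    cases hci : col i <;> cases hcj : col j <;> cases hck : col k <;>
      simp [Fintype.sum_bool]
  rw [Finset.sum_congr rfl (fun col _ => collapse col)]
  rw [Finset.sum_comm]
  refine Finset.sum_congr rfl fun x _ => ?_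
  rw [Finset.sum_comm]
  refine Finset.sum_congr rfl fun y _ => ?_
  rw [Finset.sum_comm]
  refine Finset.sum_congr rfl fun z _ => ?_
  by_cases hφ : φ x y z = true
  · simp only [if_pos hφ, one_mul]
    have step2 : ∀ col : Fin n → Bool,
        (if col i = x then (1:ℝ≥0∞) else 0) * ((if col j = y then (1:ℝ≥0∞) else 0) *
          ((if col k = z then (1:ℝ≥0∞) else 0) * ∏ l : Fin n, bern (p l) {col l}))
        = ∏ l : Fin n, (if l = i then (if col l = x then bern (p i) {col l} else 0)
            else if l = j then (if col l = y then bern (p j) {col l} else 0)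
            else if l = k then (if col l = z then bern (p k) {col l} else 0)
            else bern (p l) {col l}) := by
      intro col
      by_cases hx : col i = x
      · by_cases hy : col j = y
        · by_cases hz : col k = z
          · simp only [if_pos hx, if_pos hy, if_pos hz, one_mul]
            refine Finset.prod_congr rfl fun l _ => ?_
            by_cases hli : l = i
            · subst hli; simp [hx]
            · by_cases hlj : l = j
              · subst hlj; simp [hy, hli]
              · by_cases hlk : l = k
                · subst hlk; simp [hz, hli, hlj]
                · simp [hli, hlj, hlk]
          · simp only [if_neg hz, zero_mul, mul_zero]
            symm
            apply Finset.prod_eq_zero (Finset.mem_univ k)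
            simp [Ne.symm hik, Ne.symm hjk, hz]
        · simp only [if_neg hy, zero_mul, mul_zero]
          symm
          apply Finset.prod_eq_zero (Finset.mem_univ j)
          simp [Ne.symm hij, hjk, hy]
      · simp only [if_neg hx, zero_mul, mul_zero]
        symm
        apply Finset.prod_eq_zero (Finset.mem_univ i)
        simp [hx]
    rw [Finset.sum_congr rfl (fun col _ => step2 col)]
    rw [← Fintype.prod_sum (fun (l : Fin n) (b : Bool) =>
        (if l = i then (if b = x then bern (p i) {b} else 0)
          else if l = j then (if b = y then bern (p j) {b} else 0)
          else if l = k then (if b = z then bern (p k) {b} else 0)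
          else bern (p l) {b}))]
    have hval : ∀ l : Fin n, (∑ b : Bool,
        (if l = i then (if b = x then bern (p i) {b} else 0)
          else if l = j then (if b = y then bern (p j) {b} else 0)
          else if l = k then (if b = z then bern (p k) {b} else 0)
          else bern (p l) {b}))
        = (if l = i then bern (p i) {x} else if l = j then bern (p j) {y}
            else if l = k then bern (p k) {z} else 1) := by
      intro l
      by_cases hli : l = i
      · subst hli
        simp only [eq_self_iff_true, if_true]
        rw [Finset.sum_ite_eq' univ x (fun b => bern (p l) {b})]
        simp
      · by_cases hlj : l = j
        · subst hlj
          simp only [if_neg hli, eq_self_iff_true, if_true]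
          rw [Finset.sum_ite_eq' univ y (fun b => bern (p l) {b})]
          simp
        · by_cases hlk : l = k
          · subst hlk
            simp only [if_neg hli, if_neg hlj, eq_self_iff_true, if_true]
            rw [Finset.sum_ite_eq' univ z (fun b => bern (p l) {b})]
            simp
          · simp only [if_neg hli, if_neg hlj, if_neg hlk]
            exact bern_sum (p l)
    rw [Finset.prod_congr rfl (fun l _ => hval l)]
    exact prod_three i j k hij hik hjk _ _ _
  · simp [if_neg hφ]

set_option maxHeartbeats 1000000 in
lemma measure_forall_cols (n m : ℕ) (p : Fin n → ℝ) (i j k : Fin n)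
    (hij : i ≠ j) (hik : i ≠ k) (hjk : j ≠ k) (φ : Bool → Bool → Bool → Bool) :
    bipLaw n m p {B | ∀ a, φ (B i a) (B j a) (B k a) = true} =
      (∑ x : Bool, ∑ y : Bool, ∑ z : Bool,
        (if φ x y z = true then bern (p i) {x} * bern (p j) {y} * bern (p k) {z} else 0)) ^ m := by
  classical
  rw [measure_eq_sum, Finset.sum_filter]
  simp only [Set.mem_setOf_eq, bipLaw_singleton]
  have key1 : ∀ B : Fin n → Fin m → Bool,
      (if (∀ a, φ (B i a) (B j a) (B k a) = true)
        then ∏ l : Fin n, ∏ a : Fin m, bern (p l) {B l a} else 0)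
      = ∏ a : Fin m, ((if φ (B i a) (B j a) (B k a) = true then (1:ℝ≥0∞) else 0) *
          ∏ l : Fin n, bern (p l) {B l a}) := by
    intro B
    rw [Finset.prod_mul_distrib, Finset.prod_boole]
    rw [Finset.prod_comm]
    by_cases h : ∀ a, φ (B i a) (B j a) (B k a) = true
    · rw [if_pos h, if_pos (fun a _ => h a), one_mul]
    · rw [if_neg h, if_neg (fun hh => h (fun a => hh a (Finset.mem_univ a))), zero_mul]
  rw [Finset.sum_congr rfl (fun B _ => key1 B)]
  have swap := Fintype.sum_equiv (Equiv.piComm (fun (_ : Fin n) (_ : Fin m) => Bool))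
    (fun B : Fin n → Fin m → Bool => ∏ a : Fin m,
      ((if φ (B i a) (B j a) (B k a) = true then (1:ℝ≥0∞) else 0) *
        ∏ l : Fin n, bern (p l) {B l a}))
    (fun C : Fin m → Fin n → Bool => ∏ a : Fin m,
      ((if φ (C a i) (C a j) (C a k) = true then (1:ℝ≥0∞) else 0) *
        ∏ l : Fin n, bern (p l) {C a l}))
    (fun B => rfl)
  rw [swap, ← Fintype.prod_sum (fun (_ : Fin m) (col : Fin n → Bool) =>
      ((if φ (col i) (col j) (col k) = true then (1:ℝ≥0∞) else 0) *
        ∏ l : Fin n, bern (p l) {col l}))]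
  rw [column_sum n p i j k hij hik hjk φ]
  rw [Finset.prod_const, Finset.card_univ, Fintype.card_fin]

def bval (p : ℝ) (b : Bool) : ℝ := bif b then p else 1 - p

lemma bval_nonneg {p : ℝ} (h0 : 0 ≤ p) (h1 : p ≤ 1) (b : Bool) : 0 ≤ bval p b := by
  cases b <;> simp [bval] <;> linarith

lemma bern_apply_eq (p : ℝ) (hp0 : 0 ≤ p) (hp1 : p ≤ 1) (b : Bool) :
    bern p {b} = ENNReal.ofReal (bval p b) := by
  cases b
  · rw [bern_apply_false, min_eq_left hp1]
    show (1 : ℝ≥0∞) - ENNReal.ofReal p = ENNReal.ofReal (bval p false)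
    rw [show bval p false = 1 - p from rfl, ENNReal.ofReal_sub _ hp0, ENNReal.ofReal_one]
  · rw [bern_apply_true, min_eq_left hp1]; rfl

lemma toReal_forall (n m : ℕ) (p : Fin n → ℝ) (i j k : Fin n)
    (hij : i ≠ j) (hik : i ≠ k) (hjk : j ≠ k)
    (hi0 : 0 ≤ p i) (hi1 : p i ≤ 1) (hj0 : 0 ≤ p j) (hj1 : p j ≤ 1)
    (hk0 : 0 ≤ p k) (hk1 : p k ≤ 1) (φ : Bool → Bool → Bool → Bool) :
    (bipLaw n m p {B | ∀ a, φ (B i a) (B j a) (B k a) = true}).toReal =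
      (∑ x : Bool, ∑ y : Bool, ∑ z : Bool,
        (if φ x y z = true then bval (p i) x * bval (p j) y * bval (p k) z else 0)) ^ m := by
  rw [measure_forall_cols n m p i j k hij hik hjk φ, ENNReal.toReal_pow]
  congr 1
  set F : Bool → Bool → Bool → ℝ := fun x y z =>
    (if φ x y z = true then bval (p i) x * bval (p j) y * bval (p k) z else 0) with hF
  have hnn : ∀ x y z : Bool, 0 ≤ F x y z := by
    intro x y z
    rw [hF]
    dsimp only
    split
    · exact mul_nonneg (mul_nonneg (bval_nonneg hi0 hi1 x) (bval_nonneg hj0 hj1 y))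
        (bval_nonneg hk0 hk1 z)
    · exact le_rfl
  have hpt : ∀ x y z : Bool,
      (if φ x y z = true then bern (p i) {x} * bern (p j) {y} * bern (p k) {z} else 0)
        = ENNReal.ofReal (F x y z) := by
    intro x y z
    rw [hF]; dsimp only
    by_cases h : φ x y z = true
    · rw [if_pos h, if_pos h, bern_apply_eq _ hi0 hi1, bern_apply_eq _ hj0 hj1,
        bern_apply_eq _ hk0 hk1, ← ENNReal.ofReal_mul (bval_nonneg hi0 hi1 x),
        ← ENNReal.ofReal_mul (mul_nonneg (bval_nonneg hi0 hi1 x) (bval_nonneg hj0 hj1 y))]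
    · rw [if_neg h, if_neg h, ENNReal.ofReal_zero]
  simp only [hpt]
  have h1 : ∀ x y : Bool, (∑ z : Bool, ENNReal.ofReal (F x y z))
      = ENNReal.ofReal (∑ z : Bool, F x y z) :=
    fun x y => (ENNReal.ofReal_sum_of_nonneg (fun z _ => hnn x y z)).symm
  simp only [h1]
  have h2 : ∀ x : Bool, (∑ y : Bool, ENNReal.ofReal (∑ z : Bool, F x y z))
      = ENNReal.ofReal (∑ y : Bool, ∑ z : Bool, F x y z) :=
    fun x => (ENNReal.ofReal_sum_of_nonneg
      (fun y _ => Finset.sum_nonneg (fun z _ => hnn x y z))).symm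
  simp only [h2]
  rw [← ENNReal.ofReal_sum_of_nonneg
    (fun x _ => Finset.sum_nonneg fun y _ => Finset.sum_nonneg fun z _ => hnn x y z)]
  rw [ENNReal.toReal_ofReal (Finset.sum_nonneg fun x _ => Finset.sum_nonneg fun y _ =>
    Finset.sum_nonneg fun z _ => hnn x y z)]

lemma measAll {Ω' : Type*} [MeasurableSpace Ω'] [Countable Ω'] [MeasurableSingletonClass Ω']
    (S : Set Ω') : MeasurableSet S := S.to_countable.measurableSet

lemma pr_union {Ω' : Type*} [MeasurableSpace Ω'] (μ : Measure Ω') [IsProbabilityMeasure μ]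
    (A B : Set Ω') (hB : MeasurableSet B) :
    (μ (A ∪ B)).toReal = (μ A).toReal + (μ B).toReal - (μ (A ∩ B)).toReal := by
  have h' := congrArg ENNReal.toReal (measure_union_add_inter (μ := μ) A hB)
  rw [ENNReal.toReal_add (measure_ne_top μ _) (measure_ne_top μ _),
      ENNReal.toReal_add (measure_ne_top μ _) (measure_ne_top μ _)] at h'
  linarith

lemma pr_compl {Ω' : Type*} [MeasurableSpace Ω'] (μ : Measure Ω') [IsProbabilityMeasure μ]
    (A : Set Ω') (hA : MeasurableSet A) :
    (μ Aᶜ).toReal = 1 - (μ A).toReal := by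
  rw [prob_compl_eq_one_sub hA, ENNReal.toReal_sub_of_le prob_le_one ENNReal.one_ne_top]
  simp

lemma prob_two {Ω' : Type*} [MeasurableSpace Ω'] (μ : Measure Ω') [IsProbabilityMeasure μ]
    (Y Z : Set Ω') (hY : MeasurableSet Y) (hZ : MeasurableSet Z) :
    (μ (Yᶜ ∩ Zᶜ)).toReal = 1 - (μ Y).toReal - (μ Z).toReal + (μ (Y ∩ Z)).toReal := by
  rw [← Set.compl_union, pr_compl μ _ (hY.union hZ), pr_union μ Y Z hZ]
  ring

lemma prob_three {Ω' : Type*} [MeasurableSpace Ω'] (μ : Measure Ω') [IsProbabilityMeasure μ]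
    (X Y Z : Set Ω') (hX : MeasurableSet X) (hY : MeasurableSet Y) (hZ : MeasurableSet Z) :
    (μ (Xᶜ ∩ Yᶜ ∩ Zᶜ)).toReal = 1 - (μ X).toReal - (μ Y).toReal - (μ Z).toReal
      + (μ (X ∩ Y)).toReal + (μ (X ∩ Z)).toReal + (μ (Y ∩ Z)).toReal
      - (μ (X ∩ Y ∩ Z)).toReal := by
  rw [← Set.compl_union, ← Set.compl_union, pr_compl μ _ ((hX.union hY).union hZ)]
  rw [pr_union μ _ Z hZ, pr_union μ X Y hY]
  rw [Set.union_inter_distrib_right, pr_union μ _ _ (hY.inter hZ)]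
  rw [show X ∩ Z ∩ (Y ∩ Z) = X ∩ Y ∩ Z by ext B; simp only [Set.mem_inter_iff]; tauto]
  ring

def NFgen (m : ℕ) (p0 p1 p2 : ℝ) : ℝ :=
  1 - (1 - p0*p1)^m - (1 - p0*p2)^m - (1 - p1*p2)^m
    + (1 - p0*p1 - p0*p2 + p0*p1*p2)^m + (1 - p0*p1 - p1*p2 + p0*p1*p2)^m
    + (1 - p0*p2 - p1*p2 + p0*p1*p2)^m
    - (1 - p0*p1 - p0*p2 - p1*p2 + 2*(p0*p1*p2))^m

def DFgen (m : ℕ) (p0 p1 p2 : ℝ) : ℝ :=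
  1 - (1 - p0*p2)^m - (1 - p1*p2)^m + (1 - p0*p2 - p1*p2 + p0*p1*p2)^m

set_option maxHeartbeats 1000000 in
lemma toReal_den (n m : ℕ) (p : Fin n → ℝ) (i j k : Fin n)
    (hij : i ≠ j) (hik : i ≠ k) (hjk : j ≠ k)
    (hi0 : 0 ≤ p i) (hi1 : p i ≤ 1) (hj0 : 0 ≤ p j) (hj1 : p j ≤ 1)
    (hk0 : 0 ≤ p k) (hk1 : p k ≤ 1) :
    (bipLaw n m p {B | Adj B i k ∧ Adj B j k}).toReal = DFgen m (p i) (p j) (p k) := by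
  have hset : {B : Fin n → Fin m → Bool | Adj B i k ∧ Adj B j k}
      = {B : Fin n → Fin m → Bool | ∀ a, (!(B i a && B k a)) = true}ᶜ ∩
        {B : Fin n → Fin m → Bool | ∀ a, (!(B j a && B k a)) = true}ᶜ := by
    ext B
    simp [Adj, Set.mem_setOf_eq, not_forall]
  rw [hset, prob_two _ _ _ (measAll _) (measAll _)]
  rw [show {B : Fin n → Fin m → Bool | ∀ a, (!(B i a && B k a)) = true} ∩
        {B : Fin n → Fin m → Bool | ∀ a, (!(B j a && B k a)) = true}
      = {B : Fin n → Fin m → Bool | ∀ a, ((!(B i a && B k a)) && (!(B j a && B k a))) = true} by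
    ext B; simp only [Set.mem_setOf_eq, Set.mem_inter_iff, ← forall_and, Bool.and_eq_true]]
  rw [toReal_forall n m p i j k hij hik hjk hi0 hi1 hj0 hj1 hk0 hk1 (fun x _ z => !(x && z)),
      toReal_forall n m p i j k hij hik hjk hi0 hi1 hj0 hj1 hk0 hk1 (fun _ y z => !(y && z)),
      toReal_forall n m p i j k hij hik hjk hi0 hi1 hj0 hj1 hk0 hk1
        (fun x y z => (!(x && z)) && (!(y && z)))]
  simp only [Fintype.sum_bool, bval, Bool.and_true, Bool.and_false, Bool.not_true,
    Bool.not_false, Bool.and_self, cond_true, cond_false, if_true, if_false]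
  norm_num [DFgen]
  ring

set_option maxHeartbeats 2000000 in
lemma toReal_num (n m : ℕ) (p : Fin n → ℝ) (i j k : Fin n)
    (hij : i ≠ j) (hik : i ≠ k) (hjk : j ≠ k)
    (hi0 : 0 ≤ p i) (hi1 : p i ≤ 1) (hj0 : 0 ≤ p j) (hj1 : p j ≤ 1)
    (hk0 : 0 ≤ p k) (hk1 : p k ≤ 1) :
    (bipLaw n m p {B | Adj B i j ∧ Adj B i k ∧ Adj B j k}).toReal
      = NFgen m (p i) (p j) (p k) := by
  have hset : {B : Fin n → Fin m → Bool | Adj B i j ∧ Adj B i k ∧ Adj B j k}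
      = {B : Fin n → Fin m → Bool | ∀ a, (!(B i a && B j a)) = true}ᶜ ∩
        {B : Fin n → Fin m → Bool | ∀ a, (!(B i a && B k a)) = true}ᶜ ∩
        {B : Fin n → Fin m → Bool | ∀ a, (!(B j a && B k a)) = true}ᶜ := by
    ext B
    simp [Adj, Set.mem_setOf_eq, not_forall]
    tauto
  rw [hset, prob_three _ _ _ _ (measAll _) (measAll _) (measAll _)]
  rw [show {B : Fin n → Fin m → Bool | ∀ a, (!(B i a && B j a)) = true} ∩
        {B : Fin n → Fin m → Bool | ∀ a, (!(B i a && B k a)) = true}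
      = {B : Fin n → Fin m → Bool | ∀ a, ((!(B i a && B j a)) && (!(B i a && B k a))) = true} by
    ext B; simp only [Set.mem_setOf_eq, Set.mem_inter_iff, ← forall_and, Bool.and_eq_true]]
  rw [show {B : Fin n → Fin m → Bool | ∀ a, ((!(B i a && B j a)) && (!(B i a && B k a))) = true} ∩
        {B : Fin n → Fin m → Bool | ∀ a, (!(B j a && B k a)) = true}
      = {B : Fin n → Fin m → Bool | ∀ a,
          (((!(B i a && B j a)) && (!(B i a && B k a))) && (!(B j a && B k a))) = true} by
    ext B; simp only [Set.mem_setOf_eq, Set.mem_inter_iff, ← forall_and, Bool.and_eq_true]]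
  rw [show {B : Fin n → Fin m → Bool | ∀ a, (!(B i a && B j a)) = true} ∩
        {B : Fin n → Fin m → Bool | ∀ a, (!(B j a && B k a)) = true}
      = {B : Fin n → Fin m → Bool | ∀ a, ((!(B i a && B j a)) && (!(B j a && B k a))) = true} by
    ext B; simp only [Set.mem_setOf_eq, Set.mem_inter_iff, ← forall_and, Bool.and_eq_true]]
  rw [show {B : Fin n → Fin m → Bool | ∀ a, (!(B i a && B k a)) = true} ∩
        {B : Fin n → Fin m → Bool | ∀ a, (!(B j a && B k a)) = true}
      = {B : Fin n → Fin m → Bool | ∀ a, ((!(B i a && B k a)) && (!(B j a && B k a))) = true} by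
    ext B; simp only [Set.mem_setOf_eq, Set.mem_inter_iff, ← forall_and, Bool.and_eq_true]]
  rw [toReal_forall n m p i j k hij hik hjk hi0 hi1 hj0 hj1 hk0 hk1 (fun x y _ => !(x && y)),
      toReal_forall n m p i j k hij hik hjk hi0 hi1 hj0 hj1 hk0 hk1 (fun x _ z => !(x && z)),
      toReal_forall n m p i j k hij hik hjk hi0 hi1 hj0 hj1 hk0 hk1 (fun _ y z => !(y && z)),
      toReal_forall n m p i j k hij hik hjk hi0 hi1 hj0 hj1 hk0 hk1
        (fun x y z => (!(x && y)) && (!(x && z))),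
      toReal_forall n m p i j k hij hik hjk hi0 hi1 hj0 hj1 hk0 hk1
        (fun x y z => (!(x && y)) && (!(y && z))),
      toReal_forall n m p i j k hij hik hjk hi0 hi1 hj0 hj1 hk0 hk1
        (fun x y z => (!(x && z)) && (!(y && z))),
      toReal_forall n m p i j k hij hik hjk hi0 hi1 hj0 hj1 hk0 hk1
        (fun x y z => ((!(x && y)) && (!(x && z))) && (!(y && z)))]
  simp only [Fintype.sum_bool, bval, Bool.and_true, Bool.and_false, Bool.not_true,
    Bool.not_false, Bool.and_self, cond_true, cond_false, if_true, if_false]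
  norm_num [NFgen]
  ring

def NF (β γ : ℝ) (n : ℕ) (w0 w1 w2 : ℝ) : ℝ :=
  NFgen (numGroups β 1 n) (pw γ 1 n w0) (pw γ 1 n w1) (pw γ 1 n w2)

def DF (β γ : ℝ) (n : ℕ) (w0 w1 w2 : ℝ) : ℝ :=
  DFgen (numGroups β 1 n) (pw γ 1 n w0) (pw γ 1 n w1) (pw γ 1 n w2)

lemma pw_nonneg {γ : ℝ} (hγ : 0 ≤ γ) {w : ℝ} (hw : 0 ≤ w) (α : ℝ) (n : ℕ) :
    0 ≤ pw γ α n w := by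
  unfold pw
  refine le_min (by positivity) ?_ |>.trans (le_refl _)
  exact zero_le_one

lemma pw_le_one (γ α : ℝ) (n : ℕ) (w : ℝ) : pw γ α n w ≤ 1 := min_le_right _ _

lemma clusterRatio_eq (β γ : ℝ) (hγ : 0 < γ) (n : ℕ) (hn : 3 ≤ n) (v : ℕ → ℝ)
    (h0 : 0 ≤ v 0) (h1 : 0 ≤ v 1) (h2 : 0 ≤ v 2) :
    clusterRatio 1 β γ n v = NF β γ n (v 0) (v 1) (v 2) / DF β γ n (v 0) (v 1) (v 2) := by
  unfold clusterRatio
  rw [dif_pos hn]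
  have hij : (⟨0, by omega⟩ : Fin n) ≠ ⟨1, by omega⟩ := by simp [Fin.ext_iff]
  have hik : (⟨0, by omega⟩ : Fin n) ≠ ⟨2, by omega⟩ := by simp [Fin.ext_iff]
  have hjk : (⟨1, by omega⟩ : Fin n) ≠ ⟨2, by omega⟩ := by simp [Fin.ext_iff]
  rw [toReal_num n (numGroups β 1 n) _ _ _ _ hij hik hjk
      (pw_nonneg hγ.le h0 1 n) (pw_le_one γ 1 n _) (pw_nonneg hγ.le h1 1 n) (pw_le_one γ 1 n _)
      (pw_nonneg hγ.le h2 1 n) (pw_le_one γ 1 n _),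
    toReal_den n (numGroups β 1 n) _ _ _ _ hij hik hjk
      (pw_nonneg hγ.le h0 1 n) (pw_le_one γ 1 n _) (pw_nonneg hγ.le h1 1 n) (pw_le_one γ 1 n _)
      (pw_nonneg hγ.le h2 1 n) (pw_le_one γ 1 n _)]
  rfl

lemma m_div_tendsto (β : ℝ) (hβ : 0 < β) :
    Tendsto (fun n : ℕ => (numGroups β 1 n : ℝ) / n) atTop (𝓝 β) := by
  have hlow : Tendsto (fun n : ℕ => β - 1 / (n:ℝ)) atTop (𝓝 β) := by
    have := tendsto_const_div_atTop_nhds_zero_nat (1:ℝ)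
    simpa using tendsto_const_nhds.sub this
  apply tendsto_of_tendsto_of_tendsto_of_le_of_le' hlow tendsto_const_nhds
  · filter_upwards [eventually_ge_atTop 1] with n hn
    have hn0 : (0:ℝ) < n := by exact_mod_cast hn
    have hfl : β * (n:ℝ) - 1 < (numGroups β 1 n : ℝ) := by
      have := Nat.sub_one_lt_floor (β * (n:ℝ) ^ (1:ℝ))
      simpa [numGroups, Real.rpow_one] using this
    have heq : β - 1 / (n:ℝ) = (β * n - 1) / n := by field_simp
    rw [heq]
    rw [div_le_div_iff₀ hn0 hn0]
    have : ((numGroups β 1 n : ℝ)) * n = (numGroups β 1 n : ℝ) * n := rfl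
    nlinarith [hfl]
  · filter_upwards [eventually_ge_atTop 1] with n hn
    have hn0 : (0:ℝ) < n := by exact_mod_cast hn
    have hfl : (numGroups β 1 n : ℝ) ≤ β * n := by
      have := Nat.floor_le (by positivity : (0:ℝ) ≤ β * (n:ℝ) ^ (1:ℝ))
      simpa [numGroups, Real.rpow_one] using this
    rw [div_le_iff₀ hn0]
    linarith

lemma m_ge_one (β : ℝ) (hβ : 0 < β) : ∀ᶠ n in atTop, 1 ≤ numGroups β 1 n := by
  have h : Tendsto (fun n : ℕ => β * (n:ℝ)) atTop atTop :=
    (tendsto_natCast_atTop_atTop).const_mul_atTop hβ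
  filter_upwards [h.eventually_ge_atTop 1] with n hn
  have : (1:ℕ) ≤ ⌊β * (n:ℝ)⌋₊ := Nat.le_floor (by exact_mod_cast hn)
  simpa [numGroups, Real.rpow_one] using this

lemma pow_tendsto_one (β : ℝ) (hβ : 0 < β) (b : ℕ → ℝ) (e : ℕ → ℕ)
    (hb0 : ∀ᶠ n in atTop, 0 ≤ b n) (hb1 : ∀ᶠ n in atTop, b n ≤ 1)
    (he : ∀ᶠ n in atTop, e n ≤ numGroups β 1 n)
    (h : Tendsto (fun n => (numGroups β 1 n : ℝ) * (1 - b n)) atTop (𝓝 0)) :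
    Tendsto (fun n => b n ^ e n) atTop (𝓝 1) := by
  apply tendsto_of_tendsto_of_tendsto_of_le_of_le'
    (g := fun n => 1 - (numGroups β 1 n : ℝ) * (1 - b n)) (h := fun _ => (1:ℝ))
  · simpa using tendsto_const_nhds.sub h
  · exact tendsto_const_nhds
  · filter_upwards [hb0, hb1, he] with n h0 h1 hee
    have hber := one_add_mul_le_pow (a := b n - 1) (by linarith) (e n)
    have hcast : ((e n : ℝ)) ≤ (numGroups β 1 n : ℝ) := by exact_mod_cast hee
    have : (1:ℝ) + (e n) * (b n - 1) ≤ b n ^ e n := by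
      simpa using hber
    nlinarith [this]
  · filter_upwards [hb0, hb1] with n h0 h1
    exact pow_le_one₀ h0 h1

lemma key_diff (β : ℝ) (hβ : 0 < β) (k : ℕ) (a b : ℕ → ℝ) (c : ℝ)
    (hb0 : ∀ᶠ n in atTop, 0 ≤ b n) (hba : ∀ᶠ n in atTop, b n ≤ a n)
    (ha1 : ∀ᶠ n in atTop, a n ≤ 1)
    (hdiff : Tendsto (fun n : ℕ => (n:ℝ)^(k+1) * (a n - b n)) atTop (𝓝 c))
    (hbnd : Tendsto (fun n : ℕ => (n:ℝ) * (1 - b n)) atTop (𝓝 0)) :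
    Tendsto (fun n : ℕ => (n:ℝ)^k *
        (a n ^ numGroups β 1 n - b n ^ numGroups β 1 n)) atTop (𝓝 (β * c)) := by
  have hM := m_div_tendsto β hβ
  have hb1 : ∀ᶠ n in atTop, b n ≤ 1 := by
    filter_upwards [hba, ha1] with n h h'; linarith
  have hmb : Tendsto (fun n => (numGroups β 1 n : ℝ) * (1 - b n)) atTop (𝓝 0) := by
    have hh := hM.mul hbnd
    rw [mul_zero] at hh
    apply hh.congr'
    filter_upwards [eventually_ge_atTop 1] with n hn
    have hn0 : ((n:ℝ)) ≠ 0 := by positivity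
    field_simp
  have hpow : Tendsto (fun n => b n ^ (numGroups β 1 n - 1)) atTop (𝓝 1) :=
    pow_tendsto_one β hβ b _ hb0 hb1 (Eventually.of_forall fun n => Nat.sub_le _ _) hmb
  have hlow : Tendsto (fun n => ((numGroups β 1 n : ℝ) / n) * b n ^ (numGroups β 1 n - 1))
      atTop (𝓝 β) := by
    have := hM.mul hpow
    simpa using this
  have hS : Tendsto (fun n =>
      (∑ i ∈ Finset.range (numGroups β 1 n), a n ^ i * b n ^ (numGroups β 1 n - 1 - i)) / n)
      atTop (𝓝 β) := by
    apply tendsto_of_tendsto_of_tendsto_of_le_of_le' hlow hM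
    · filter_upwards [hb0, hba, ha1, m_ge_one β hβ, eventually_ge_atTop 1] with n h0 hba' ha' hm hn
      have hn0 : (0:ℝ) < n := by exact_mod_cast hn
      have hterm : ∀ i ∈ Finset.range (numGroups β 1 n),
          b n ^ (numGroups β 1 n - 1) ≤ a n ^ i * b n ^ (numGroups β 1 n - 1 - i) := by
        intro i hi
        rw [Finset.mem_range] at hi
        have h1 : b n ^ i ≤ a n ^ i := pow_le_pow_left₀ h0 hba' i
        have h2 : b n ^ (numGroups β 1 n - 1) = b n ^ i * b n ^ (numGroups β 1 n - 1 - i) := by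
          rw [← pow_add]
          congr 1
          omega
        rw [h2]
        exact mul_le_mul_of_nonneg_right h1 (pow_nonneg h0 _)
      have hsum := Finset.card_nsmul_le_sum (Finset.range (numGroups β 1 n)) _ _ hterm
      rw [Finset.card_range, nsmul_eq_mul] at hsum
      rw [div_mul_eq_mul_div]
      gcongr
    · filter_upwards [hb0, hba, ha1, eventually_ge_atTop 1] with n h0 hba' ha' hn
      have hn0 : (0:ℝ) < n := by exact_mod_cast hn
      have hterm : ∀ i ∈ Finset.range (numGroups β 1 n),
          a n ^ i * b n ^ (numGroups β 1 n - 1 - i) ≤ 1 := by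
        intro i _
        have hb1' : b n ≤ 1 := le_trans hba' ha'
        exact mul_le_one₀ (pow_le_one₀ (le_trans h0 hba') ha') (pow_nonneg h0 _)
          (pow_le_one₀ h0 hb1')
      have hsum := Finset.sum_le_card_nsmul (Finset.range (numGroups β 1 n)) _ _ hterm
      rw [Finset.card_range, nsmul_eq_mul, mul_one] at hsum
      gcongr
  have hfin := hdiff.mul hS
  rw [show c * β = β * c from mul_comm _ _] at hfin
  apply hfin.congr'
  filter_upwards [eventually_ge_atTop 1] with n hn
  have hn0 : ((n:ℝ)) ≠ 0 := by
    have : (0:ℝ) < n := by exact_mod_cast hn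
    exact this.ne'
  have hgeom := geom_sum₂_mul (a n) (b n) (numGroups β 1 n)
  rw [← hgeom]
  field_simp
  ring

section Limits

variable {β γ : ℝ} {c0 c1 c2 : ℝ} {P0 P1 P2 : ℕ → ℝ}

lemma hpoly_aux (F : ℝ → ℝ) (hF : Continuous F) :
    Tendsto (fun n : ℕ => F ((n:ℝ)⁻¹)) atTop (𝓝 (F 0)) :=
  (hF.tendsto 0).comp tendsto_inv_atTop_nhds_zero_nat

lemma single_lim (hβ : 0 < β) (Q : ℕ → ℝ) (cq : ℝ)
    (hQ0 : ∀ n, 0 ≤ Q n) (hQ1 : ∀ n, Q n ≤ 1)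
    (hQev : ∀ᶠ n : ℕ in atTop, Q n = cq * ((n:ℝ)⁻¹)^2) :
    Tendsto (fun n : ℕ => (n:ℝ) * (1 - (1 - Q n) ^ numGroups β 1 n)) atTop (𝓝 (β * cq)) := by
  have h := key_diff β hβ 1 (fun _ => 1) (fun n => 1 - Q n) cq
    (Eventually.of_forall fun n => by show (0:ℝ) ≤ 1 - Q n; nlinarith [hQ1 n])
    (Eventually.of_forall fun n => by show 1 - Q n ≤ (1:ℝ); nlinarith [hQ0 n])
    (Eventually.of_forall fun n => le_refl 1)
    (by
      apply Tendsto.congr' ?_ (tendsto_const_nhds :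
        Tendsto (fun _ : ℕ => cq) atTop (𝓝 cq))
      filter_upwards [hQev, eventually_ge_atTop 1] with n hq hn
      have hn0 : ((n:ℝ)) ≠ 0 := by
        have : (0:ℝ) < n := by exact_mod_cast hn
        exact this.ne'
      rw [hq]
      field_simp
      try ring)
    (by
      have hl := hpoly_aux (fun x => cq * x) (by fun_prop)
      simp only [mul_zero] at hl
      apply Tendsto.congr' ?_ hl
      filter_upwards [hQev, eventually_ge_atTop 1] with n hq hn
      have hn0 : ((n:ℝ)) ≠ 0 := by
        have : (0:ℝ) < n := by exact_mod_cast hn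
        exact this.ne'
      rw [hq]
      field_simp
      try ring)
  apply h.congr
  intro n
  simp [one_pow, pow_one]

set_option maxHeartbeats 1000000 in
lemma pair_lim (hβ : 0 < β) (A B T : ℕ → ℝ) (ca cb ct : ℝ)
    (hA0 : ∀ n, 0 ≤ A n) (hA1 : ∀ n, A n ≤ 1)
    (hB0 : ∀ n, 0 ≤ B n) (hB1 : ∀ n, B n ≤ 1)
    (hTA : ∀ n, T n ≤ A n) (hABT : ∀ n, A n * B n ≤ T n)
    (hAev : ∀ᶠ n : ℕ in atTop, A n = ca * ((n:ℝ)⁻¹)^2)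
    (hBev : ∀ᶠ n : ℕ in atTop, B n = cb * ((n:ℝ)⁻¹)^2)
    (hTev : ∀ᶠ n : ℕ in atTop, T n = ct * ((n:ℝ)⁻¹)^3) :
    Tendsto (fun n : ℕ => (n:ℝ)^2 * ((1 - A n - B n + T n) ^ numGroups β 1 n
      - ((1 - A n) * (1 - B n)) ^ numGroups β 1 n)) atTop (𝓝 (β * ct)) := by
  exact key_diff β hβ 2 (fun n => 1 - A n - B n + T n) (fun n => (1 - A n)*(1 - B n)) ct
    (Eventually.of_forall fun n => by
      show (0:ℝ) ≤ (1 - A n)*(1 - B n)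
      nlinarith [hA1 n, hB1 n])
    (Eventually.of_forall fun n => by
      show (1 - A n)*(1 - B n) ≤ 1 - A n - B n + T n
      nlinarith [hABT n])
    (Eventually.of_forall fun n => by
      show 1 - A n - B n + T n ≤ (1:ℝ)
      nlinarith [hTA n, hB0 n])
    (by
      have hl := hpoly_aux (fun x => ct - ca * cb * x) (by fun_prop)
      simp only [mul_zero, sub_zero] at hl
      apply Tendsto.congr' ?_ hl
      filter_upwards [hAev, hBev, hTev, eventually_ge_atTop 1] with n ha hb ht hn
      have hn0 : ((n:ℝ)) ≠ 0 := by
        have : (0:ℝ) < n := by exact_mod_cast hn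
        exact this.ne'
      rw [ha, hb, ht]
      field_simp
      try ring)
    (by
      have hl := hpoly_aux (fun x => ca * x + cb * x - ca * cb * x^3) (by fun_prop)
      norm_num at hl
      apply Tendsto.congr' ?_ hl
      filter_upwards [hAev, hBev, hTev, eventually_ge_atTop 1] with n ha hb ht hn
      have hn0 : ((n:ℝ)) ≠ 0 := by
        have : (0:ℝ) < n := by exact_mod_cast hn
        exact this.ne'
      rw [ha, hb]
      field_simp
      try ring)

set_option maxHeartbeats 1000000 in
lemma triple_lim (hβ : 0 < β) (A B C T : ℕ → ℝ) (ca cb cc ct : ℝ)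
    (hA0 : ∀ n, 0 ≤ A n) (hA1 : ∀ n, A n ≤ 1)
    (hB0 : ∀ n, 0 ≤ B n) (hB1 : ∀ n, B n ≤ 1)
    (hC0 : ∀ n, 0 ≤ C n) (hC1 : ∀ n, C n ≤ 1)
    (hTA : ∀ n, T n ≤ A n) (hTB : ∀ n, T n ≤ B n)
    (hba : ∀ᶠ n : ℕ in atTop, (1 - A n)*(1 - B n)*(1 - C n) ≤ 1 - A n - B n - C n + 2*T n)
    (hAev : ∀ᶠ n : ℕ in atTop, A n = ca * ((n:ℝ)⁻¹)^2)
    (hBev : ∀ᶠ n : ℕ in atTop, B n = cb * ((n:ℝ)⁻¹)^2)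
    (hCev : ∀ᶠ n : ℕ in atTop, C n = cc * ((n:ℝ)⁻¹)^2)
    (hTev : ∀ᶠ n : ℕ in atTop, T n = ct * ((n:ℝ)⁻¹)^3) :
    Tendsto (fun n : ℕ => (n:ℝ)^2 * ((1 - A n - B n - C n + 2*T n) ^ numGroups β 1 n
      - ((1 - A n) * (1 - B n) * (1 - C n)) ^ numGroups β 1 n)) atTop (𝓝 (β * (2*ct))) := by
  exact key_diff β hβ 2 (fun n => 1 - A n - B n - C n + 2*T n)
    (fun n => (1 - A n)*(1 - B n)*(1 - C n)) (2*ct)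
    (Eventually.of_forall fun n => by
      show (0:ℝ) ≤ (1 - A n)*(1 - B n)*(1 - C n)
      have h1 : (0:ℝ) ≤ 1 - A n := by linarith [hA1 n]
      have h2 : (0:ℝ) ≤ 1 - B n := by linarith [hB1 n]
      have h3 : (0:ℝ) ≤ 1 - C n := by linarith [hC1 n]
      positivity)
    hba
    (Eventually.of_forall fun n => by
      show 1 - A n - B n - C n + 2*T n ≤ (1:ℝ)
      nlinarith [hTA n, hTB n, hC0 n])
    (by
      have hl := hpoly_aux
        (fun x => 2*ct - (ca*cb + ca*cc + cb*cc)*x + ca*cb*cc*x^3) (by fun_prop)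
      norm_num at hl
      apply Tendsto.congr' ?_ hl
      filter_upwards [hAev, hBev, hCev, hTev, eventually_ge_atTop 1] with n ha hb hc ht hn
      have hn0 : ((n:ℝ)) ≠ 0 := by
        have : (0:ℝ) < n := by exact_mod_cast hn
        exact this.ne'
      rw [ha, hb, hc, ht]
      field_simp
      try ring)
    (by
      have hl := hpoly_aux
        (fun x => (ca + cb + cc)*x - (ca*cb + ca*cc + cb*cc)*x^3 + ca*cb*cc*x^5)
        (by fun_prop)
      norm_num at hl
      apply Tendsto.congr' ?_ hl
      filter_upwards [hAev, hBev, hCev, eventually_ge_atTop 1] with n ha hb hc hn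
      have hn0 : ((n:ℝ)) ≠ 0 := by
        have : (0:ℝ) < n := by exact_mod_cast hn
        exact this.ne'
      rw [ha, hb, hc]
      field_simp
      try ring)

set_option maxHeartbeats 1000000 in
lemma DF_lim (hβ : 0 < β) (hc2 : 0 < c2)
    (hP0 : ∀ n, 0 ≤ P0 n) (hP0le : ∀ n, P0 n ≤ 1)
    (hP1 : ∀ n, 0 ≤ P1 n) (hP1le : ∀ n, P1 n ≤ 1)
    (hP2 : ∀ n, 0 ≤ P2 n) (hP2le : ∀ n, P2 n ≤ 1)
    (h0ev : ∀ᶠ n : ℕ in atTop, P0 n = c0 * (n:ℝ)⁻¹)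
    (h1ev : ∀ᶠ n : ℕ in atTop, P1 n = c1 * (n:ℝ)⁻¹)
    (h2ev : ∀ᶠ n : ℕ in atTop, P2 n = c2 * (n:ℝ)⁻¹) :
    Tendsto (fun n : ℕ => (n:ℝ)^2 * DFgen (numGroups β 1 n) (P0 n) (P1 n) (P2 n)) atTop
      (𝓝 (β * (c0*c1*c2) * (1 + β * c2))) := by
  have hS02 := single_lim hβ (fun n => P0 n * P2 n) (c0*c2)
    (fun n => mul_nonneg (hP0 n) (hP2 n))
    (fun n => mul_le_one₀ (hP0le n) (hP2 n) (hP2le n))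
    (by filter_upwards [h0ev, h2ev] with n e0 e2; rw [e0, e2]; ring)
  have hS12 := single_lim hβ (fun n => P1 n * P2 n) (c1*c2)
    (fun n => mul_nonneg (hP1 n) (hP2 n))
    (fun n => mul_le_one₀ (hP1le n) (hP2 n) (hP2le n))
    (by filter_upwards [h1ev, h2ev] with n e1 e2; rw [e1, e2]; ring)
  have hPair := pair_lim hβ (fun n => P0 n * P2 n) (fun n => P1 n * P2 n)
    (fun n => P0 n * P1 n * P2 n) (c0*c2) (c1*c2) (c0*c1*c2)
    (fun n => mul_nonneg (hP0 n) (hP2 n))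
    (fun n => mul_le_one₀ (hP0le n) (hP2 n) (hP2le n))
    (fun n => mul_nonneg (hP1 n) (hP2 n))
    (fun n => mul_le_one₀ (hP1le n) (hP2 n) (hP2le n))
    (fun n => by
      show P0 n * P1 n * P2 n ≤ P0 n * P2 n
      nlinarith [mul_nonneg (mul_nonneg (hP0 n) (hP2 n)) (sub_nonneg.mpr (hP1le n))])
    (fun n => by
      show (P0 n * P2 n) * (P1 n * P2 n) ≤ P0 n * P1 n * P2 n
      nlinarith [mul_nonneg (mul_nonneg (mul_nonneg (hP0 n) (hP1 n)) (hP2 n)) (sub_nonneg.mpr (hP2le n))])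
    (by filter_upwards [h0ev, h2ev] with n e0 e2; rw [e0, e2]; ring)
    (by filter_upwards [h1ev, h2ev] with n e1 e2; rw [e1, e2]; ring)
    (by filter_upwards [h0ev, h1ev, h2ev] with n e0 e1 e2; rw [e0, e1, e2]; ring)
  have hcomb := (hS02.mul hS12).add hPair
  have hval : β*(c0*c2) * (β*(c1*c2)) + β*(c0*c1*c2) = β * (c0*c1*c2) * (1 + β * c2) := by
    ring
  rw [hval] at hcomb
  apply hcomb.congr
  intro n
  simp only [DFgen, mul_pow]
  ring

set_option maxHeartbeats 1000000 in
lemma NF_lim (hβ : 0 < β)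
    (hP0 : ∀ n, 0 ≤ P0 n) (hP0le : ∀ n, P0 n ≤ 1)
    (hP1 : ∀ n, 0 ≤ P1 n) (hP1le : ∀ n, P1 n ≤ 1)
    (hP2 : ∀ n, 0 ≤ P2 n) (hP2le : ∀ n, P2 n ≤ 1)
    (h0ev : ∀ᶠ n : ℕ in atTop, P0 n = c0 * (n:ℝ)⁻¹)
    (h1ev : ∀ᶠ n : ℕ in atTop, P1 n = c1 * (n:ℝ)⁻¹)
    (h2ev : ∀ᶠ n : ℕ in atTop, P2 n = c2 * (n:ℝ)⁻¹) :
    Tendsto (fun n : ℕ => (n:ℝ)^2 * NFgen (numGroups β 1 n) (P0 n) (P1 n) (P2 n)) atTop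
      (𝓝 (β * (c0*c1*c2))) := by
  have hS01 := single_lim hβ (fun n => P0 n * P1 n) (c0*c1)
    (fun n => mul_nonneg (hP0 n) (hP1 n))
    (fun n => mul_le_one₀ (hP0le n) (hP1 n) (hP1le n))
    (by filter_upwards [h0ev, h1ev] with n e0 e1; rw [e0, e1]; ring)
  have hS02 := single_lim hβ (fun n => P0 n * P2 n) (c0*c2)
    (fun n => mul_nonneg (hP0 n) (hP2 n))
    (fun n => mul_le_one₀ (hP0le n) (hP2 n) (hP2le n))
    (by filter_upwards [h0ev, h2ev] with n e0 e2; rw [e0, e2]; ring)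
  have hS12 := single_lim hβ (fun n => P1 n * P2 n) (c1*c2)
    (fun n => mul_nonneg (hP1 n) (hP2 n))
    (fun n => mul_le_one₀ (hP1le n) (hP2 n) (hP2le n))
    (by filter_upwards [h1ev, h2ev] with n e1 e2; rw [e1, e2]; ring)
  -- pair (01,02), shared vertex 0
  have hPairA := pair_lim hβ (fun n => P0 n * P1 n) (fun n => P0 n * P2 n)
    (fun n => P0 n * P1 n * P2 n) (c0*c1) (c0*c2) (c0*c1*c2)
    (fun n => mul_nonneg (hP0 n) (hP1 n))
    (fun n => mul_le_one₀ (hP0le n) (hP1 n) (hP1le n))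
    (fun n => mul_nonneg (hP0 n) (hP2 n))
    (fun n => mul_le_one₀ (hP0le n) (hP2 n) (hP2le n))
    (fun n => by
      show P0 n * P1 n * P2 n ≤ P0 n * P1 n
      nlinarith [mul_nonneg (mul_nonneg (hP0 n) (hP1 n)) (sub_nonneg.mpr (hP2le n))])
    (fun n => by
      show (P0 n * P1 n) * (P0 n * P2 n) ≤ P0 n * P1 n * P2 n
      nlinarith [mul_nonneg (mul_nonneg (mul_nonneg (hP0 n) (hP1 n)) (hP2 n)) (sub_nonneg.mpr (hP0le n))])
    (by filter_upwards [h0ev, h1ev] with n e0 e1; rw [e0, e1]; ring)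
    (by filter_upwards [h0ev, h2ev] with n e0 e2; rw [e0, e2]; ring)
    (by filter_upwards [h0ev, h1ev, h2ev] with n e0 e1 e2; rw [e0, e1, e2]; ring)
  -- pair (01,12), shared vertex 1
  have hPairB := pair_lim hβ (fun n => P0 n * P1 n) (fun n => P1 n * P2 n)
    (fun n => P0 n * P1 n * P2 n) (c0*c1) (c1*c2) (c0*c1*c2)
    (fun n => mul_nonneg (hP0 n) (hP1 n))
    (fun n => mul_le_one₀ (hP0le n) (hP1 n) (hP1le n))
    (fun n => mul_nonneg (hP1 n) (hP2 n))
    (fun n => mul_le_one₀ (hP1le n) (hP2 n) (hP2le n))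
    (fun n => by
      show P0 n * P1 n * P2 n ≤ P0 n * P1 n
      nlinarith [mul_nonneg (mul_nonneg (hP0 n) (hP1 n)) (sub_nonneg.mpr (hP2le n))])
    (fun n => by
      show (P0 n * P1 n) * (P1 n * P2 n) ≤ P0 n * P1 n * P2 n
      nlinarith [mul_nonneg (mul_nonneg (mul_nonneg (hP0 n) (hP1 n)) (hP2 n)) (sub_nonneg.mpr (hP1le n))])
    (by filter_upwards [h0ev, h1ev] with n e0 e1; rw [e0, e1]; ring)
    (by filter_upwards [h1ev, h2ev] with n e1 e2; rw [e1, e2]; ring)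
    (by filter_upwards [h0ev, h1ev, h2ev] with n e0 e1 e2; rw [e0, e1, e2]; ring)
  -- pair (02,12), shared vertex 2
  have hPairC := pair_lim hβ (fun n => P0 n * P2 n) (fun n => P1 n * P2 n)
    (fun n => P0 n * P1 n * P2 n) (c0*c2) (c1*c2) (c0*c1*c2)
    (fun n => mul_nonneg (hP0 n) (hP2 n))
    (fun n => mul_le_one₀ (hP0le n) (hP2 n) (hP2le n))
    (fun n => mul_nonneg (hP1 n) (hP2 n))
    (fun n => mul_le_one₀ (hP1le n) (hP2 n) (hP2le n))
    (fun n => by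
      show P0 n * P1 n * P2 n ≤ P0 n * P2 n
      nlinarith [mul_nonneg (mul_nonneg (hP0 n) (hP2 n)) (sub_nonneg.mpr (hP1le n))])
    (fun n => by
      show (P0 n * P2 n) * (P1 n * P2 n) ≤ P0 n * P1 n * P2 n
      nlinarith [mul_nonneg (mul_nonneg (mul_nonneg (hP0 n) (hP1 n)) (hP2 n)) (sub_nonneg.mpr (hP2le n))])
    (by filter_upwards [h0ev, h2ev] with n e0 e2; rw [e0, e2]; ring)
    (by filter_upwards [h1ev, h2ev] with n e1 e2; rw [e1, e2]; ring)
    (by filter_upwards [h0ev, h1ev, h2ev] with n e0 e1 e2; rw [e0, e1, e2]; ring)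
  -- triple
  have hsumt : Tendsto (fun n : ℕ => P0 n + P1 n + P2 n) atTop (𝓝 0) := by
    have hl := hpoly_aux (fun x => c0*x + c1*x + c2*x) (by fun_prop)
    norm_num at hl
    apply Tendsto.congr' ?_ hl
    filter_upwards [h0ev, h1ev, h2ev] with n e0 e1 e2
    rw [e0, e1, e2]
  have hsum2 : ∀ᶠ n : ℕ in atTop, P0 n + P1 n + P2 n ≤ 2 :=
    hsumt.eventually_le_const (by norm_num)
  have hTrip := triple_lim hβ (fun n => P0 n * P1 n) (fun n => P0 n * P2 n)
    (fun n => P1 n * P2 n) (fun n => P0 n * P1 n * P2 n)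
    (c0*c1) (c0*c2) (c1*c2) (c0*c1*c2)
    (fun n => mul_nonneg (hP0 n) (hP1 n))
    (fun n => mul_le_one₀ (hP0le n) (hP1 n) (hP1le n))
    (fun n => mul_nonneg (hP0 n) (hP2 n))
    (fun n => mul_le_one₀ (hP0le n) (hP2 n) (hP2le n))
    (fun n => mul_nonneg (hP1 n) (hP2 n))
    (fun n => mul_le_one₀ (hP1le n) (hP2 n) (hP2le n))
    (fun n => by
      show P0 n * P1 n * P2 n ≤ P0 n * P1 n
      nlinarith [mul_nonneg (mul_nonneg (hP0 n) (hP1 n)) (sub_nonneg.mpr (hP2le n))])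
    (fun n => by
      show P0 n * P1 n * P2 n ≤ P0 n * P2 n
      nlinarith [mul_nonneg (mul_nonneg (hP0 n) (hP2 n)) (sub_nonneg.mpr (hP1le n))])
    (by
      filter_upwards [hsum2] with n hs
      have hT0 : 0 ≤ P0 n * P1 n * P2 n :=
        mul_nonneg (mul_nonneg (hP0 n) (hP1 n)) (hP2 n)
      have h2' : (0:ℝ) ≤ 2 - (P0 n + P1 n + P2 n) + P0 n * P1 n * P2 n := by linarith
      show (1 - P0 n * P1 n) * (1 - P0 n * P2 n) * (1 - P1 n * P2 n)
        ≤ 1 - P0 n * P1 n - P0 n * P2 n - P1 n * P2 n + 2 * (P0 n * P1 n * P2 n)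
      nlinarith [mul_nonneg hT0 h2'])
    (by filter_upwards [h0ev, h1ev] with n e0 e1; rw [e0, e1]; ring)
    (by filter_upwards [h0ev, h2ev] with n e0 e2; rw [e0, e2]; ring)
    (by filter_upwards [h1ev, h2ev] with n e1 e2; rw [e1, e2]; ring)
    (by filter_upwards [h0ev, h1ev, h2ev] with n e0 e1 e2; rw [e0, e1, e2]; ring)
  have hinv := tendsto_inv_atTop_nhds_zero_nat (𝕜 := ℝ)
  have hcomb := ((((((hS01.mul hS02).mul hS12).mul hinv).add hPairA).add hPairB).add
    hPairC).sub hTrip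
  have hval : β*(c0*c1) * (β*(c0*c2)) * (β*(c1*c2)) * 0 + β*(c0*c1*c2) + β*(c0*c1*c2)
      + β*(c0*c1*c2) - β*(2*(c0*c1*c2)) = β * (c0*c1*c2) := by ring
  rw [hval] at hcomb
  apply hcomb.congr'
  filter_upwards [eventually_ge_atTop 1] with n hn
  have hn0 : ((n:ℝ)) ≠ 0 := by
    have : (0:ℝ) < n := by exact_mod_cast hn
    exact this.ne'
  simp only [NFgen, mul_pow]
  field_simp
  ring

end Limits

lemma pw_eventually (γ : ℝ) (w : ℝ) :
    ∀ᶠ n : ℕ in atTop, pw γ 1 n w = γ * w * (n:ℝ)⁻¹ := by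
  have h : Tendsto (fun n : ℕ => (n:ℝ)) atTop atTop := tendsto_natCast_atTop_atTop
  filter_upwards [eventually_ge_atTop 1, h.eventually_ge_atTop (γ * w)] with n hn hge
  have hn0 : (0:ℝ) < n := by exact_mod_cast hn
  unfold pw
  have hexp : (-(1 + 1) / 2 : ℝ) = -1 := by norm_num
  rw [hexp]
  have hrp : ((n:ℝ)) ^ (-1 : ℝ) = (n:ℝ)⁻¹ := by
    rw [Real.rpow_neg hn0.le, Real.rpow_one]
  rw [hrp]
  apply min_eq_left
  calc γ * w * (n:ℝ)⁻¹ ≤ (n:ℝ) * (n:ℝ)⁻¹ := by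
        apply mul_le_mul_of_nonneg_right hge (inv_nonneg.mpr hn0.le)
    _ = 1 := mul_inv_cancel₀ hn0.ne'

lemma det_limit (β γ : ℝ) (hβ : 0 < β) (hγ : 0 < γ) (v : ℕ → ℝ)
    (h0 : 0 < v 0) (h1 : 0 < v 1) (h2 : 0 < v 2) :
    Tendsto (fun n => clusterRatio 1 β γ n v) atTop (𝓝 ((1 + β * γ * v 2)⁻¹)) := by
  have hNF := NF_lim (β := β) (c0 := γ * v 0) (c1 := γ * v 1) (c2 := γ * v 2)
      (P0 := fun n => pw γ 1 n (v 0)) (P1 := fun n => pw γ 1 n (v 1))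
      (P2 := fun n => pw γ 1 n (v 2)) hβ
      (fun n => pw_nonneg hγ.le h0.le 1 n) (fun n => pw_le_one γ 1 n (v 0))
      (fun n => pw_nonneg hγ.le h1.le 1 n) (fun n => pw_le_one γ 1 n (v 1))
      (fun n => pw_nonneg hγ.le h2.le 1 n) (fun n => pw_le_one γ 1 n (v 2))
      (pw_eventually γ (v 0)) (pw_eventually γ (v 1)) (pw_eventually γ (v 2))
  have hDF := DF_lim (β := β) (c0 := γ * v 0) (c1 := γ * v 1) (c2 := γ * v 2)
      (P0 := fun n => pw γ 1 n (v 0)) (P1 := fun n => pw γ 1 n (v 1))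
      (P2 := fun n => pw γ 1 n (v 2)) hβ (by positivity)
      (fun n => pw_nonneg hγ.le h0.le 1 n) (fun n => pw_le_one γ 1 n (v 0))
      (fun n => pw_nonneg hγ.le h1.le 1 n) (fun n => pw_le_one γ 1 n (v 1))
      (fun n => pw_nonneg hγ.le h2.le 1 n) (fun n => pw_le_one γ 1 n (v 2))
      (pw_eventually γ (v 0)) (pw_eventually γ (v 1)) (pw_eventually γ (v 2))
  have hDne : β * (γ * v 0 * (γ * v 1) * (γ * v 2)) * (1 + β * (γ * v 2)) ≠ 0 := by
    positivity
  have hdiv := hNF.div hDF hDne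
  have hratio : Tendsto (fun n : ℕ =>
      NFgen (numGroups β 1 n) (pw γ 1 n (v 0)) (pw γ 1 n (v 1)) (pw γ 1 n (v 2)) /
      DFgen (numGroups β 1 n) (pw γ 1 n (v 0)) (pw γ 1 n (v 1)) (pw γ 1 n (v 2))) atTop
      (𝓝 (β * (γ * v 0 * (γ * v 1) * (γ * v 2)) /
        (β * (γ * v 0 * (γ * v 1) * (γ * v 2)) * (1 + β * (γ * v 2))))) := by
    apply hdiv.congr'
    filter_upwards [eventually_ge_atTop 1] with n hn
    have hn0 : ((n:ℝ)^2) ≠ 0 := by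
      have : (0:ℝ) < n := by exact_mod_cast hn
      positivity
    simp only [Pi.div_apply]
    rw [mul_div_mul_left _ _ hn0]
  have hvalue : β * (γ * v 0 * (γ * v 1) * (γ * v 2)) /
        (β * (γ * v 0 * (γ * v 1) * (γ * v 2)) * (1 + β * (γ * v 2)))
      = (1 + β * γ * v 2)⁻¹ := by
    have hA : β * (γ * v 0 * (γ * v 1) * (γ * v 2)) ≠ 0 := by positivity
    rw [div_mul_cancel_left₀ hA]
    ring_nf
  rw [hvalue] at hratio
  apply hratio.congr'
  filter_upwards [eventually_ge_atTop 3] with n hn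
  exact (clusterRatio_eq β γ hγ n hn v h0.le h1.le h2.le).symm

end ClusterAux

/-- Theorem 2(b): in the random intersection graph `G(n,m,F)` with `α = 1`, i.e.
`m = ⌊β n⌋`, and `p_i = min(γ W_i n⁻¹, 1)`, if `F` has finite mean, then the conditional
clustering coefficient `c̄_{i,j,k}^{(n)}` converges to `(1 + β γ W_k)⁻¹` in probability
as `n → ∞` (here `k` is the vertex with index `2`). -/
theorem clustering_alpha_eq_one {Ω : Type*} [MeasurableSpace Ω]
    (P : Measure Ω) [IsProbabilityMeasure P]
    (β γ : ℝ) (hβ : 0 < β) (hγ : 0 < γ)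
    (F : Measure ℝ) [IsProbabilityMeasure F]
    (hFpos : F (Set.Iic 0) = 0)
    (hFint : Integrable (fun x => x) F) (hFmean : ∫ x, x ∂F = 1)
    (W : ℕ → Ω → ℝ) (hWmeas : ∀ i, Measurable (W i))
    (hWdist : ∀ i, Measure.map (W i) P = F)
    (hWindep : iIndepFun W P) :
    ∀ ε : ℝ, 0 < ε →
      Tendsto
        (fun n =>
          P {ω | ε ≤ |clusterRatio 1 β γ n (fun l => W l ω) - (1 + β * γ * W 2 ω)⁻¹|})
        atTop (nhds 0) := by
  have hnull : ∀ l : ℕ, P {ω | W l ω ≤ 0} = 0 := by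
    intro l
    have h : P (W l ⁻¹' Set.Iic 0) = F (Set.Iic 0) := by
      rw [← hWdist l, Measure.map_apply (hWmeas l) measurableSet_Iic]
    have : (W l ⁻¹' Set.Iic 0) = {ω | W l ω ≤ 0} := by
      ext ω; simp
    rw [this] at h
    rw [h, hFpos]
  have hae : ∀ᵐ ω ∂P, 0 < W 0 ω ∧ 0 < W 1 ω ∧ 0 < W 2 ω := by
    have h0 : ∀ᵐ ω ∂P, 0 < W 0 ω := by
      rw [ae_iff]
      simpa [not_lt] using hnull 0
    have h1 : ∀ᵐ ω ∂P, 0 < W 1 ω := by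
      rw [ae_iff]
      simpa [not_lt] using hnull 1
    have h2 : ∀ᵐ ω ∂P, 0 < W 2 ω := by
      rw [ae_iff]
      simpa [not_lt] using hnull 2
    exact (h0.and (h1.and h2))
  have htend : ∀ᵐ ω ∂P, Tendsto (fun n => clusterRatio 1 β γ n (fun l => W l ω)) atTop
      (nhds ((1 + β * γ * W 2 ω)⁻¹)) := by
    filter_upwards [hae] with ω hω
    exact ClusterAux.det_limit β γ hβ hγ (fun l => W l ω) hω.1 hω.2.1 hω.2.2
  have hmeas : ∀ n : ℕ, AEStronglyMeasurable
      (fun ω => clusterRatio 1 β γ n (fun l => W l ω)) P := by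
    intro n
    by_cases hn : 3 ≤ n
    · have hm : Measurable (fun ω =>
          ClusterAux.NF β γ n (W 0 ω) (W 1 ω) (W 2 ω) /
          ClusterAux.DF β γ n (W 0 ω) (W 1 ω) (W 2 ω)) := by
        have hpwm : ∀ l : ℕ, Measurable (fun ω => pw γ 1 n (W l ω)) := by
          intro l
          unfold pw
          exact (((hWmeas l).const_mul γ).mul_const _).min measurable_const
        have hm0 := hpwm 0
        have hm1 := hpwm 1
        have hm2 := hpwm 2
        unfold ClusterAux.NF ClusterAux.DF ClusterAux.NFgen ClusterAux.DFgen
        fun_prop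
      apply (hm.aestronglyMeasurable).congr
      filter_upwards [hae] with ω hω
      exact (ClusterAux.clusterRatio_eq β γ hγ n hn (fun l => W l ω)
        hω.1.le hω.2.1.le hω.2.2.le).symm
    · have : (fun ω => clusterRatio 1 β γ n (fun l => W l ω)) = fun _ => (0:ℝ) := by
        funext ω
        simp [clusterRatio, hn]
      rw [this]
      exact aestronglyMeasurable_const
  intro ε hε
  have htm := MeasureTheory.tendstoInMeasure_iff_dist.mp
    (MeasureTheory.tendstoInMeasure_of_tendsto_ae hmeas htend) ε hε
  simpa [Real.dist_eq] using htm
end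
end
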